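/- arXiv:math/0412478 — 18 statements merged into one kernel-verified Lean document; each statement's English description precedes it below -/
import Mathlib

section
/- Let Q be a supported quantale with support ς, unit e, involution a ↦ a*, top element 1 and bottom element 0. Then for all a, b ∈ Q: (i) ς a = a whenever a ≤ e; (ii) ς(ς a) = ς a; (iii) if ς a ≤ ς b then a = (ς b) a; (iv) a = (ς a) a; (v) (ς a)* = ς a; (vi) a = a ς(a*); (vii) ς a = 0 if and only if a = 0; (viii) ς a ≤ ς(a a*); (ix) (ς a) 1 = a 1; (x) a 1 = a a* 1; (xi) (ς a)(ς a) = ς a; (xii) a ≤ a a* a; (xiii) ς(a 1) b = a 1 ∧ b; (xiv) ς(a 1) = a 1 ∧ e; (xv) ς(a ∧ b) ≤ a b*. -/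
/-- Basic properties of supported quantales (Lemma `prop:supps`). -/
theorem stmt_0 {Q : Type*} [CompleteLattice Q]
    (m : Q → Q → Q) (e : Q) (st : Q → Q) (sp : Q → Q)
    (hassoc : ∀ a b c : Q, m (m a b) c = m a (m b c))
    (hdistl : ∀ (a : Q) (T : Set Q), m a (sSup T) = sSup ((fun b => m a b) '' T))
    (hdistr : ∀ (b : Q) (T : Set Q), m (sSup T) b = sSup ((fun a => m a b) '' T))
    (hel : ∀ a : Q, m e a = a) (her : ∀ a : Q, m a e = a)
    (hstsup : ∀ T : Set Q, st (sSup T) = sSup (st '' T))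
    (hstst : ∀ a : Q, st (st a) = a)
    (hstm : ∀ a b : Q, st (m a b) = m (st b) (st a))
    (hspsup : ∀ T : Set Q, sp (sSup T) = sSup (sp '' T))
    (hsp1 : ∀ a : Q, sp a ≤ e)
    (hsp2 : ∀ a : Q, sp a ≤ m a (st a))
    (hsp3 : ∀ a : Q, a ≤ m (sp a) a) :
    ∀ a b : Q,
      (a ≤ e → sp a = a) ∧
      sp (sp a) = sp a ∧
      (sp a ≤ sp b → a = m (sp b) a) ∧
      a = m (sp a) a ∧
      st (sp a) = sp a ∧
      a = m a (sp (st a)) ∧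
      (sp a = ⊥ ↔ a = ⊥) ∧
      sp a ≤ sp (m a (st a)) ∧
      m (sp a) ⊤ = m a ⊤ ∧
      m a ⊤ = m (m a (st a)) ⊤ ∧
      m (sp a) (sp a) = sp a ∧
      a ≤ m (m a (st a)) a ∧
      m (sp (m a ⊤)) b = m a ⊤ ⊓ b ∧
      sp (m a ⊤) = m a ⊤ ⊓ e ∧
      sp (a ⊓ b) ≤ m a (st b) := by
  -- basic consequences
  have hbotl : ∀ x : Q, m ⊥ x = ⊥ := fun x => by
    have h := hdistr x ∅; simpa using h
  have hml : ∀ (c : Q) {x y : Q}, x ≤ y → m c x ≤ m c y := by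
    intro c x y h
    have h1 := hdistl c {x, y}
    rw [sSup_pair, sup_eq_right.mpr h, Set.image_pair, sSup_pair] at h1
    rw [h1]; exact le_sup_left
  have hmr : ∀ (c : Q) {x y : Q}, x ≤ y → m x c ≤ m y c := by
    intro c x y h
    have h1 := hdistr c {x, y}
    rw [sSup_pair, sup_eq_right.mpr h, Set.image_pair, sSup_pair] at h1
    rw [h1]; exact le_sup_left
  have hstmono : ∀ {x y : Q}, x ≤ y → st x ≤ st y := by
    intro x y h
    have h1 := hstsup {x, y}
    rw [sSup_pair, sup_eq_right.mpr h, Set.image_pair, sSup_pair] at h1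
    rw [h1]; exact le_sup_left
  have hspmono : ∀ {x y : Q}, x ≤ y → sp x ≤ sp y := by
    intro x y h
    have h1 := hspsup {x, y}
    rw [sSup_pair, sup_eq_right.mpr h, Set.image_pair, sSup_pair] at h1
    rw [h1]; exact le_sup_left
  have hste : st e = e := by
    have h1 : ∀ c : Q, m c (st e) = c := fun c => by
      conv_lhs => rw [← hstst (m c (st e))]
      rw [hstm, hstst, hel, hstst]
    have h2 := h1 e
    rwa [hel] at h2
  intro a b
  have i : ∀ c : Q, c ≤ e → sp c = c := fun c hc => le_antisymm
    (le_trans (hsp2 c) (le_trans (hml c (hstmono hc)) (by rw [hste, her])))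
    (le_trans (hsp3 c) (le_trans (hml (sp c) hc) (le_of_eq (her _))))
  have ii : ∀ c : Q, sp (sp c) = sp c := fun c => i _ (hsp1 c)
  have iv : ∀ c : Q, c = m (sp c) c := fun c => le_antisymm (hsp3 c)
    (le_trans (hmr c (hsp1 c)) (le_of_eq (hel c)))
  have iii : sp a ≤ sp b → a = m (sp b) a := fun h => le_antisymm
    (le_trans (hsp3 a) (hmr a h))
    (le_trans (hmr a (hsp1 b)) (le_of_eq (hel a)))
  have v : ∀ c : Q, st (sp c) = sp c := fun c => by
    have h1 : sp c ≤ st (sp c) := by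
      have h2 := hsp2 (sp c)
      rw [ii] at h2
      exact le_trans h2 (le_trans (hmr _ (hsp1 c)) (le_of_eq (hel _)))
    refine le_antisymm ?_ h1
    have h3 := hstmono h1
    rwa [hstst] at h3
  have vi : a = m a (sp (st a)) := by
    have h1 := congrArg st (iv (st a))
    rwa [hstst, hstm, hstst, v] at h1
  have vii : sp a = ⊥ ↔ a = ⊥ := by
    constructor
    · intro h
      have h1 := hsp3 a
      rw [h, hbotl] at h1
      exact le_bot_iff.mp h1
    · intro h
      have h1 := hspsup ∅
      rw [h]; simpa using h1
  have viii : sp a ≤ sp (m a (st a)) := by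
    have h1 := hspmono (hsp2 a)
    rwa [ii] at h1
  have ix : ∀ c : Q, m (sp c) ⊤ = m c ⊤ := fun c => by
    apply le_antisymm
    · calc m (sp c) ⊤ ≤ m (m c (st c)) ⊤ := hmr ⊤ (hsp2 c)
        _ = m c (m (st c) ⊤) := hassoc ..
        _ ≤ m c ⊤ := hml c le_top
    · calc m c ⊤ = m (m (sp c) c) ⊤ := by rw [← iv c]
        _ = m (sp c) (m c ⊤) := hassoc ..
        _ ≤ m (sp c) ⊤ := hml _ le_top
  have xii : a ≤ m (m a (st a)) a := le_trans (hsp3 a) (hmr a (hsp2 a))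
  have x : m a ⊤ = m (m a (st a)) ⊤ := by
    apply le_antisymm
    · calc m a ⊤ ≤ m (m (m a (st a)) a) ⊤ := hmr ⊤ xii
        _ = m (m a (st a)) (m a ⊤) := hassoc ..
        _ ≤ m (m a (st a)) ⊤ := hml _ le_top
    · calc m (m a (st a)) ⊤ = m a (m (st a) ⊤) := hassoc ..
        _ ≤ m a ⊤ := hml a le_top
  have xi : m (sp a) (sp a) = sp a := by
    have h1 := iv (sp a)
    rw [ii] at h1
    exact h1.symm
  have htop : m ⊤ ⊤ = (⊤ : Q) := by
    apply le_antisymm le_top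
    calc (⊤ : Q) = m e ⊤ := (hel ⊤).symm
      _ ≤ m ⊤ ⊤ := hmr ⊤ le_top
  have xiii : ∀ c : Q, m (sp (m a ⊤)) c = m a ⊤ ⊓ c := fun c => by
    apply le_antisymm
    · apply le_inf
      · calc m (sp (m a ⊤)) c ≤ m (sp (m a ⊤)) ⊤ := hml _ le_top
          _ = m (m a ⊤) ⊤ := ix _
          _ = m a (m ⊤ ⊤) := hassoc ..
          _ = m a ⊤ := by rw [htop]
      · exact le_trans (hmr c (hsp1 _)) (le_of_eq (hel c))
    · calc m a ⊤ ⊓ c ≤ m (sp (m a ⊤ ⊓ c)) (m a ⊤ ⊓ c) := hsp3 _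
        _ ≤ m (sp (m a ⊤ ⊓ c)) c := hml _ inf_le_right
        _ ≤ m (sp (m a ⊤)) c := hmr c (hspmono inf_le_left)
  have xiv : sp (m a ⊤) = m a ⊤ ⊓ e := by
    have h1 := xiii e
    rwa [her] at h1
  have xv : sp (a ⊓ b) ≤ m a (st b) :=
    le_trans (hsp2 _) (le_trans (hmr _ inf_le_left) (hml a (hstmono inf_le_right)))
  exact ⟨i a, ii a, iii, iv a, v a, vi, vii, viii, ix a, x, xi, xii, xiii b, xiv, xv⟩
end

section
/- Let Q be a supported quantale with support ς and unit e. Then every element a ≤ e satisfies a* = a and a a = a, and for all a, b ≤ e one has a b = a ∧ b (so the principal order ideal ↓e, which coincides with the image of ς, is a frame whose meet is the quantale multiplication). Moreover, for every right-sided element a (i.e. a 1 ≤ a) one has (ς a) 1 = a, and consequently for right-sided a, b: ς a ≤ ς b if and only if a ≤ b. -/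
/-- In a supported quantale, elements below the unit are self-adjoint
idempotents whose product is their meet, `↓e` is the image of the support and is a frame
with multiplication as meet, and on right-sided elements the support is an order embedding
split by `a ↦ a 1`. -/
theorem stmt_1 {Q : Type*} [CompleteLattice Q]
    (m : Q → Q → Q) (e : Q) (st : Q → Q) (sp : Q → Q)
    (hassoc : ∀ a b c : Q, m (m a b) c = m a (m b c))
    (hdistl : ∀ (a : Q) (T : Set Q), m a (sSup T) = sSup ((fun b => m a b) '' T))
    (hdistr : ∀ (b : Q) (T : Set Q), m (sSup T) b = sSup ((fun a => m a b) '' T))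
    (hel : ∀ a : Q, m e a = a) (her : ∀ a : Q, m a e = a)
    (hstsup : ∀ T : Set Q, st (sSup T) = sSup (st '' T))
    (hstst : ∀ a : Q, st (st a) = a)
    (hstm : ∀ a b : Q, st (m a b) = m (st b) (st a))
    (hspsup : ∀ T : Set Q, sp (sSup T) = sSup (sp '' T))
    (hsp1 : ∀ a : Q, sp a ≤ e)
    (hsp2 : ∀ a : Q, sp a ≤ m a (st a))
    (hsp3 : ∀ a : Q, a ≤ m (sp a) a) :
    (∀ a : Q, a ≤ e → st a = a ∧ m a a = a) ∧
    (∀ a b : Q, a ≤ e → b ≤ e → m a b = a ⊓ b) ∧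
    (∀ a : Q, a ≤ e ↔ ∃ b : Q, sp b = a) ∧
    (∀ a : Q, a ≤ e → ∀ T : Set Q, (∀ x ∈ T, x ≤ e) → a ⊓ sSup T = ⨆ b ∈ T, a ⊓ b) ∧
    (∀ a : Q, m a ⊤ ≤ a → m (sp a) ⊤ = a) ∧
    (∀ a b : Q, m a ⊤ ≤ a → m b ⊤ ≤ b → (sp a ≤ sp b ↔ a ≤ b)) := by
  -- monotonicity lemmas
  have mono_l : ∀ c : Q, ∀ {a b : Q}, a ≤ b → m c a ≤ m c b := by
    intro c a b h
    have hd := hdistl c {a, b}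
    rw [Set.image_pair, sSup_pair, sSup_pair, sup_eq_right.mpr h] at hd
    rw [hd]; exact le_sup_left
  have mono_r : ∀ c : Q, ∀ {a b : Q}, a ≤ b → m a c ≤ m b c := by
    intro c a b h
    have hd := hdistr c {a, b}
    rw [Set.image_pair, sSup_pair, sSup_pair, sup_eq_right.mpr h] at hd
    rw [hd]; exact le_sup_left
  have st_mono : ∀ {a b : Q}, a ≤ b → st a ≤ st b := by
    intro a b h
    have hd := hstsup {a, b}
    rw [Set.image_pair, sSup_pair, sSup_pair, sup_eq_right.mpr h] at hd
    rw [hd]; exact le_sup_left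
  have sp_mono : ∀ {a b : Q}, a ≤ b → sp a ≤ sp b := by
    intro a b h
    have hd := hspsup {a, b}
    rw [Set.image_pair, sSup_pair, sSup_pair, sup_eq_right.mpr h] at hd
    rw [hd]; exact le_sup_left
  -- st e = e
  have hste : st e = e := by
    have h1 : m (st e) e = e := by
      have h := hstm (st e) e
      rw [her, hstst] at h
      exact h.symm
    rw [her (st e)] at h1
    exact h1
  -- sp fixes elements below e
  have spfix : ∀ a : Q, a ≤ e → sp a = a := by
    intro a ha
    have hsta : st a ≤ e := hste ▸ st_mono ha
    apply le_antisymm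
    · exact (hsp2 a).trans ((mono_l a hsta).trans (le_of_eq (her a)))
    · exact (hsp3 a).trans ((mono_l (sp a) ha).trans (le_of_eq (her (sp a))))
  -- st fixes elements below e
  have stfix : ∀ a : Q, a ≤ e → st a = a := by
    have half : ∀ a : Q, a ≤ e → a ≤ st a := by
      intro a ha
      calc a = sp a := (spfix a ha).symm
        _ ≤ m a (st a) := hsp2 a
        _ ≤ m e (st a) := mono_r (st a) ha
        _ = st a := hel _
    intro a ha
    have hsta : st a ≤ e := hste ▸ st_mono ha
    refine le_antisymm ?_ (half a ha)
    have h2 := half (st a) hsta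
    rwa [hstst] at h2
  -- idempotence below e
  have idem : ∀ a : Q, a ≤ e → m a a = a := by
    intro a ha
    apply le_antisymm
    · exact (mono_l a ha).trans (le_of_eq (her a))
    · calc a = sp a := (spfix a ha).symm
        _ ≤ m a (st a) := hsp2 a
        _ = m a a := by rw [stfix a ha]
  -- multiplication is meet below e
  have mmeet : ∀ a b : Q, a ≤ e → b ≤ e → m a b = a ⊓ b := by
    intro a b ha hb
    apply le_antisymm
    · exact le_inf ((mono_l a hb).trans (le_of_eq (her a)))
        ((mono_r b ha).trans (le_of_eq (hel b)))
    · calc a ⊓ b = m (a ⊓ b) (a ⊓ b) := (idem _ (inf_le_left.trans ha)).symm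
        _ ≤ m a b := (mono_l (a ⊓ b) inf_le_right).trans (mono_r b inf_le_left)
  refine ⟨fun a ha => ⟨stfix a ha, idem a ha⟩, mmeet, ?_, ?_, ?_, ?_⟩
  · intro a
    exact ⟨fun ha => ⟨a, spfix a ha⟩, fun ⟨b, hb⟩ => hb ▸ hsp1 b⟩
  · intro a ha T hT
    have hsT : sSup T ≤ e := sSup_le hT
    calc a ⊓ sSup T = m a (sSup T) := (mmeet a _ ha hsT).symm
      _ = sSup ((fun b => m a b) '' T) := hdistl a T
      _ = ⨆ b ∈ T, m a b := by rw [sSup_image]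
      _ = ⨆ b ∈ T, a ⊓ b := by
          refine iSup_congr fun b => ?_
          by_cases hb : b ∈ T
          · simp only [hb, iSup_pos]; exact mmeet a b ha (hT b hb)
          · simp [hb]
  · intro a ha
    apply le_antisymm
    · calc m (sp a) ⊤ ≤ m (m a (st a)) ⊤ := mono_r ⊤ (hsp2 a)
        _ = m a (m (st a) ⊤) := hassoc a (st a) ⊤
        _ ≤ m a ⊤ := mono_l a le_top
        _ ≤ a := ha
    · exact (hsp3 a).trans (mono_l (sp a) le_top)
  · intro a b ha hb
    constructor
    · intro h
      have hka : m (sp a) ⊤ = a := by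
        apply le_antisymm
        · calc m (sp a) ⊤ ≤ m (m a (st a)) ⊤ := mono_r ⊤ (hsp2 a)
            _ = m a (m (st a) ⊤) := hassoc a (st a) ⊤
            _ ≤ m a ⊤ := mono_l a le_top
            _ ≤ a := ha
        · exact (hsp3 a).trans (mono_l (sp a) le_top)
      have hkb : m (sp b) ⊤ = b := by
        apply le_antisymm
        · calc m (sp b) ⊤ ≤ m (m b (st b)) ⊤ := mono_r ⊤ (hsp2 b)
            _ = m b (m (st b) ⊤) := hassoc b (st b) ⊤
            _ ≤ m b ⊤ := mono_l b le_top
            _ ≤ b := hb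
        · exact (hsp3 b).trans (mono_l (sp b) le_top)
      calc a = m (sp a) ⊤ := hka.symm
        _ ≤ m (sp b) ⊤ := mono_r ⊤ h
        _ = b := hkb
    · exact sp_mono
end

section
/- Let Q be a supported quantale with support ς and unit e. The following conditions are equivalent: (1) ς(a b) = ς(a ς b) for all a, b; (2) ς(a b) ≤ ς a for all a, b; (3) ς(a 1) = ς a for all a; (4) a 1 ∧ e = ς a for all a; (5) a 1 ∧ b = (ς a) b for all a, b; (6) for all a, b: a ≤ (ς b) a if and only if ς a ≤ ς b; (7) ς a = ⨅{ b : b ≤ e and a ≤ b a } for all a; (8) for all a, b: ς a ≤ b 1 if and only if ς a ≤ ς b; (9) ς a = ⨆{ b : b ≤ e and b ≤ a 1 } for all a. -/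
private lemma mono_of_sSup' {Q : Type*} [CompleteLattice Q] (f : Q → Q)
    (hf : ∀ T : Set Q, f (sSup T) = sSup (f '' T)) : Monotone f := by
  intro x y h
  have h2 := hf {x, y}
  rw [Set.image_pair, sSup_pair, sSup_pair, sup_eq_right.mpr h] at h2
  exact le_sup_left.trans h2.ge

/-- Equivalent characterizations of stability of a support
(Lemma `lemma:defstab`). -/
theorem stmt_2 {Q : Type*} [CompleteLattice Q]
    (m : Q → Q → Q) (e : Q) (st : Q → Q) (sp : Q → Q)
    (hassoc : ∀ a b c : Q, m (m a b) c = m a (m b c))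
    (hdistl : ∀ (a : Q) (T : Set Q), m a (sSup T) = sSup ((fun b => m a b) '' T))
    (hdistr : ∀ (b : Q) (T : Set Q), m (sSup T) b = sSup ((fun a => m a b) '' T))
    (hel : ∀ a : Q, m e a = a) (her : ∀ a : Q, m a e = a)
    (hstsup : ∀ T : Set Q, st (sSup T) = sSup (st '' T))
    (hstst : ∀ a : Q, st (st a) = a)
    (hstm : ∀ a b : Q, st (m a b) = m (st b) (st a))
    (hspsup : ∀ T : Set Q, sp (sSup T) = sSup (sp '' T))
    (hsp1 : ∀ a : Q, sp a ≤ e)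
    (hsp2 : ∀ a : Q, sp a ≤ m a (st a))
    (hsp3 : ∀ a : Q, a ≤ m (sp a) a) :
    List.TFAE [
      ∀ a b : Q, sp (m a b) = sp (m a (sp b)),
      ∀ a b : Q, sp (m a b) ≤ sp a,
      ∀ a : Q, sp (m a ⊤) = sp a,
      ∀ a : Q, m a ⊤ ⊓ e = sp a,
      ∀ a b : Q, m a ⊤ ⊓ b = m (sp a) b,
      ∀ a b : Q, (a ≤ m (sp b) a ↔ sp a ≤ sp b),
      ∀ a : Q, sp a = sInf {b : Q | b ≤ e ∧ a ≤ m b a},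
      ∀ a b : Q, (sp a ≤ m b ⊤ ↔ sp a ≤ sp b),
      ∀ a : Q, sp a = sSup {b : Q | b ≤ e ∧ b ≤ m a ⊤}
    ] := by
  -- monotonicity facts
  have hmr : ∀ a : Q, Monotone (m a) := fun a => mono_of_sSup' _ (hdistl a)
  have hml : ∀ b : Q, Monotone (fun a => m a b) := fun b => mono_of_sSup' _ (hdistr b)
  have hspm : Monotone sp := mono_of_sSup' _ hspsup
  have hstmono : Monotone st := mono_of_sSup' _ hstsup
  -- st e = e
  have hste : st e = e := by
    have h := hstm (st e) e
    rw [her, hstst] at h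
    rw [her] at h
    exact h.symm
  -- sp b = b for b ≤ e
  have hsple : ∀ b : Q, b ≤ e → sp b = b := by
    intro b hb
    apply le_antisymm
    · calc sp b ≤ m b (st b) := hsp2 b
        _ ≤ m b e := hmr b ((hstmono hb).trans_eq hste)
        _ = b := her b
    · calc b ≤ m (sp b) b := hsp3 b
        _ ≤ m (sp b) e := hmr _ hb
        _ = sp b := her _
  have hspidem : ∀ a : Q, sp (sp a) = sp a := fun a => hsple _ (hsp1 a)
  have hspa : ∀ a : Q, m (sp a) a = a := by
    intro a
    apply le_antisymm
    · calc m (sp a) a ≤ m e a := hml a (hsp1 a)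
        _ = a := hel a
    · exact hsp3 a
  have hsptop : ∀ a : Q, sp a ≤ m a ⊤ := fun a => (hsp2 a).trans (hmr a le_top)
  tfae_have 1 → 2 := by
    intro h1 a b
    calc sp (m a b) = sp (m a (sp b)) := h1 a b
      _ ≤ sp (m a e) := hspm (hmr a (hsp1 b))
      _ = sp a := by rw [her]
  tfae_have 2 → 3 := by
    intro h2 a
    apply le_antisymm (h2 a ⊤)
    apply hspm
    calc a = m a e := (her a).symm
      _ ≤ m a ⊤ := hmr a le_top
  tfae_have 3 → 4 := by
    intro h3 a
    apply le_antisymm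
    · calc m a ⊤ ⊓ e = sp (m a ⊤ ⊓ e) := (hsple _ inf_le_right).symm
        _ ≤ sp (m a ⊤) := hspm inf_le_left
        _ = sp a := h3 a
    · exact le_inf (hsptop a) (hsp1 a)
  tfae_have 4 → 5 := by
    intro h4 a b
    apply le_antisymm
    · have hc : sp (m a ⊤ ⊓ b) ≤ sp a := by
        rw [← h4 a]
        refine le_inf ?_ (hsp1 _)
        calc sp (m a ⊤ ⊓ b) ≤ m (m a ⊤ ⊓ b) (st (m a ⊤ ⊓ b)) := hsp2 _
          _ ≤ m (m a ⊤) ⊤ := le_trans (hml _ inf_le_left) (hmr _ le_top)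
          _ = m a (m ⊤ ⊤) := hassoc a ⊤ ⊤
          _ ≤ m a ⊤ := hmr a le_top
      calc m a ⊤ ⊓ b ≤ m (sp (m a ⊤ ⊓ b)) (m a ⊤ ⊓ b) := hsp3 _
        _ ≤ m (sp a) b := le_trans (hml _ hc) (hmr _ inf_le_right)
    · refine le_inf ?_ ?_
      · calc m (sp a) b ≤ m (m a ⊤) b := hml b (hsptop a)
          _ = m a (m ⊤ b) := hassoc a ⊤ b
          _ ≤ m a ⊤ := hmr a le_top
      · calc m (sp a) b ≤ m e b := hml b (hsp1 a)
          _ = b := hel b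
  tfae_have 5 → 1 := by
    intro h5
    have h4 : ∀ a : Q, m a ⊤ ⊓ e = sp a := by
      intro a; rw [h5 a e, her]
    have htop : ∀ b : Q, m b ⊤ = m (sp b) ⊤ := by
      intro b; rw [← h5 b ⊤, inf_top_eq]
    intro a b
    calc sp (m a b) = m (m a b) ⊤ ⊓ e := (h4 _).symm
      _ = m a (m b ⊤) ⊓ e := by rw [hassoc]
      _ = m a (m (sp b) ⊤) ⊓ e := by rw [htop]
      _ = m (m a (sp b)) ⊤ ⊓ e := by rw [hassoc]
      _ = sp (m a (sp b)) := h4 _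
  tfae_have 2 → 6 := by
    intro h2 a b
    constructor
    · intro h
      calc sp a ≤ sp (m (sp b) a) := hspm h
        _ ≤ sp (sp b) := h2 _ _
        _ = sp b := hspidem b
    · intro h
      calc a ≤ m (sp a) a := hsp3 a
        _ ≤ m (sp b) a := hml a h
  tfae_have 6 → 7 := by
    intro h6 a
    apply le_antisymm
    · apply le_sInf
      rintro b ⟨hbe, hab⟩
      have h : a ≤ m (sp b) a := by rw [hsple b hbe]; exact hab
      calc sp a ≤ sp b := (h6 a b).mp h
        _ = b := hsple b hbe
    · exact sInf_le ⟨hsp1 a, hsp3 a⟩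
  tfae_have 7 → 6 := by
    intro h7 a b
    constructor
    · intro h
      rw [h7 a]
      exact sInf_le ⟨hsp1 b, h⟩
    · intro h
      calc a ≤ m (sp a) a := hsp3 a
        _ ≤ m (sp b) a := hml a h
  tfae_have 6 → 2 := by
    intro h6 a b
    apply (h6 (m a b) a).mp
    have : m a b = m (sp a) (m a b) := by
      conv_lhs => rw [← hspa a]
      rw [hassoc]
    exact this.le
  tfae_have 4 → 8 := by
    intro h4 a b
    constructor
    · intro h
      rw [← h4 b]
      exact le_inf h (hsp1 a)
    · intro h
      exact h.trans (hsptop b)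
  tfae_have 8 → 9 := by
    intro h8 a
    apply le_antisymm
    · exact le_sSup ⟨hsp1 a, hsptop a⟩
    · apply sSup_le
      rintro b ⟨hbe, hb⟩
      have h : sp b ≤ m a ⊤ := by rw [hsple b hbe]; exact hb
      calc b = sp b := (hsple b hbe).symm
        _ ≤ sp a := (h8 b a).mp h
  tfae_have 9 → 4 := by
    intro h9 a
    apply le_antisymm
    · rw [h9 a]
      exact le_sSup ⟨inf_le_right, inf_le_left⟩
    · exact le_inf (hsptop a) (hsp1 a)
  tfae_finish
end

section
/- Let Q be a stably supported quantale with support ς and unit e. Then ς(a b) = a ς b for all a, b ∈ Q with a ≤ e. -/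
/-- In a stably supported quantale, `ς(a b) = a ς b` whenever `a ≤ e`
(Lemma `prop:strongsupp`-2). -/
theorem stmt_4 {Q : Type*} [CompleteLattice Q]
    (m : Q → Q → Q) (e : Q) (st : Q → Q) (sp : Q → Q)
    (hassoc : ∀ a b c : Q, m (m a b) c = m a (m b c))
    (hdistl : ∀ (a : Q) (T : Set Q), m a (sSup T) = sSup ((fun b => m a b) '' T))
    (hdistr : ∀ (b : Q) (T : Set Q), m (sSup T) b = sSup ((fun a => m a b) '' T))
    (hel : ∀ a : Q, m e a = a) (her : ∀ a : Q, m a e = a)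
    (hstsup : ∀ T : Set Q, st (sSup T) = sSup (st '' T))
    (hstst : ∀ a : Q, st (st a) = a)
    (hstm : ∀ a b : Q, st (m a b) = m (st b) (st a))
    (hspsup : ∀ T : Set Q, sp (sSup T) = sSup (sp '' T))
    (hsp1 : ∀ a : Q, sp a ≤ e)
    (hsp2 : ∀ a : Q, sp a ≤ m a (st a))
    (hsp3 : ∀ a : Q, a ≤ m (sp a) a)
    (hstable : ∀ a b : Q, sp (m a b) ≤ sp a) :
    ∀ a b : Q, a ≤ e → sp (m a b) = m a (sp b) := by
  -- monotonicity of m in the right argument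
  have hml : ∀ a x y : Q, x ≤ y → m a x ≤ m a y := by
    intro a x y hxy
    have h : m a y = m a (sSup {x, y}) := by rw [sSup_pair, sup_eq_right.mpr hxy]
    rw [h, hdistl]
    exact le_sSup ⟨x, by simp⟩
  -- monotonicity of m in the left argument
  have hmr : ∀ b x y : Q, x ≤ y → m x b ≤ m y b := by
    intro b x y hxy
    have h : m y b = m (sSup {x, y}) b := by rw [sSup_pair, sup_eq_right.mpr hxy]
    rw [h, hdistr]
    exact le_sSup ⟨x, by simp⟩
  have hspmono : ∀ x y : Q, x ≤ y → sp x ≤ sp y := by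
    intro x y hxy
    have h : sp y = sp (sSup {x, y}) := by rw [sSup_pair, sup_eq_right.mpr hxy]
    rw [h, hspsup]
    exact le_sSup ⟨x, by simp⟩
  have hstmono : ∀ x y : Q, x ≤ y → st x ≤ st y := by
    intro x y hxy
    have h : st y = st (sSup {x, y}) := by rw [sSup_pair, sup_eq_right.mpr hxy]
    rw [h, hstsup]
    exact le_sSup ⟨x, by simp⟩
  -- st e = e
  have hsteL : ∀ b : Q, m (st e) b = b := by
    intro b
    have h := hstm (st b) e
    rw [her, hstst] at h
    exact h.symm
  have hste : st e = e := by
    have h1 := her (st e)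
    have h2 := hsteL e
    rw [h1] at h2; exact h2
  -- sp fixes elements below e
  have hfix : ∀ x : Q, x ≤ e → sp x = x := by
    intro x hx
    apply le_antisymm
    · calc sp x ≤ m x (st x) := hsp2 x
        _ ≤ m x (st e) := hml _ _ _ (hstmono _ _ hx)
        _ = m x e := by rw [hste]
        _ = x := her x
    · calc x ≤ m (sp x) x := hsp3 x
        _ ≤ m (sp x) e := hml _ _ _ hx
        _ = sp x := her _
  intro a b ha
  have haspb : m a (sp b) ≤ e := by
    calc m a (sp b) ≤ m e e := le_trans (hml _ _ _ (hsp1 b)) (hmr _ _ _ ha)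
      _ = e := hel e
  apply le_antisymm
  · -- sp (m a b) ≤ m a (sp b)
    have h1 : sp (m a b) ≤ a := le_trans (hstable a b) (le_of_eq (hfix a ha))
    have h2 : sp (m a b) ≤ sp b := hspmono _ _ (by
      calc m a b ≤ m e b := hmr _ _ _ ha
        _ = b := hel b)
    calc sp (m a b) ≤ m (sp (sp (m a b))) (sp (m a b)) := hsp3 _
      _ = m (sp (m a b)) (sp (m a b)) := by rw [hfix _ (hsp1 _)]
      _ ≤ m a (sp b) := le_trans (hmr _ _ _ h1) (hml _ _ _ h2)
  · -- m a (sp b) ≤ sp (m a b)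
    calc m a (sp b) = sp (m a (sp b)) := (hfix _ haspb).symm
      _ ≤ sp (m a (m b (st b))) := hspmono _ _ (hml _ _ _ (hsp2 b))
      _ = sp (m (m a b) (st b)) := by rw [hassoc]
      _ ≤ sp (m a b) := hstable _ _
end

section
/- Let Q be a unital involutive quantale with a stable support ς. Then ς a = e ∧ (a a*) for all a ∈ Q, and ς is the unique support on Q: any map ς' : Q → Q preserving arbitrary suprema and satisfying ς' a ≤ e, ς' a ≤ a a*, and a ≤ (ς' a) a for all a, equals ς. -/
/-- A stable support satisfies `ς a = e ⊓ a a*` and is the unique support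
on the quantale (Theorem `thm:fullsubcat`-1). -/
theorem stmt_5 {Q : Type*} [CompleteLattice Q]
    (m : Q → Q → Q) (e : Q) (st : Q → Q) (sp : Q → Q)
    (hassoc : ∀ a b c : Q, m (m a b) c = m a (m b c))
    (hdistl : ∀ (a : Q) (T : Set Q), m a (sSup T) = sSup ((fun b => m a b) '' T))
    (hdistr : ∀ (b : Q) (T : Set Q), m (sSup T) b = sSup ((fun a => m a b) '' T))
    (hel : ∀ a : Q, m e a = a) (her : ∀ a : Q, m a e = a)
    (hstsup : ∀ T : Set Q, st (sSup T) = sSup (st '' T))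
    (hstst : ∀ a : Q, st (st a) = a)
    (hstm : ∀ a b : Q, st (m a b) = m (st b) (st a))
    (hspsup : ∀ T : Set Q, sp (sSup T) = sSup (sp '' T))
    (hsp1 : ∀ a : Q, sp a ≤ e)
    (hsp2 : ∀ a : Q, sp a ≤ m a (st a))
    (hsp3 : ∀ a : Q, a ≤ m (sp a) a)
    (hstable : ∀ a b : Q, sp (m a b) ≤ sp a) :
    (∀ a : Q, sp a = e ⊓ m a (st a)) ∧
    (∀ sp' : Q → Q,
      (∀ T : Set Q, sp' (sSup T) = sSup (sp' '' T)) →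
      (∀ a : Q, sp' a ≤ e) →
      (∀ a : Q, sp' a ≤ m a (st a)) →
      (∀ a : Q, a ≤ m (sp' a) a) →
      sp' = sp) := by
  -- monotonicity of sSup-preserving maps
  have mono : ∀ (f : Q → Q), (∀ T : Set Q, f (sSup T) = sSup (f '' T)) →
      ∀ {b c : Q}, b ≤ c → f b ≤ f c := by
    intro f hf b c hbc
    have h1 : f c = f b ⊔ f c := by
      have h := hf {b, c}
      rw [sSup_pair, sup_eq_right.mpr hbc] at h
      rw [h, Set.image_pair, sSup_pair]; simp
    rw [h1]; exact le_sup_left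
  have mmonol : ∀ (a : Q) {b c : Q}, b ≤ c → m a b ≤ m a c :=
    fun a _ _ hbc => mono (fun x => m a x) (hdistl a) hbc
  have mmonor : ∀ (a : Q) {b c : Q}, b ≤ c → m b a ≤ m c a :=
    fun a _ _ hbc => mono (fun x => m x a) (hdistr a) hbc
  have stmono : ∀ {b c : Q}, b ≤ c → st b ≤ st c := fun hbc => mono st hstsup hbc
  have spmono : ∀ {b c : Q}, b ≤ c → sp b ≤ sp c := fun hbc => mono sp hspsup hbc
  -- st e = e
  have hste : st e = e := by
    have h1 : ∀ x : Q, m (st e) x = x := by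
      intro x
      have h := hstm (st x) e
      rw [her, hstst] at h
      exact h.symm
    calc st e = m (st e) e := (her _).symm
      _ = e := h1 e
  -- sp fixes elements below e
  have spfix : ∀ b : Q, b ≤ e → sp b = b := by
    intro b hb
    apply le_antisymm
    · calc sp b ≤ m b (st b) := hsp2 b
        _ ≤ m b (st e) := mmonol b (stmono hb)
        _ = b := by rw [hste, her]
    · calc b ≤ m (sp b) b := hsp3 b
        _ ≤ m (sp b) e := mmonol _ hb
        _ = sp b := her _
  -- main formula
  have main : ∀ a : Q, sp a = e ⊓ m a (st a) := by
    intro a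
    apply le_antisymm (le_inf (hsp1 a) (hsp2 a))
    calc e ⊓ m a (st a) = sp (e ⊓ m a (st a)) := (spfix _ inf_le_left).symm
      _ ≤ sp (m a (st a)) := spmono inf_le_right
      _ ≤ sp a := hstable a (st a)
  refine ⟨main, ?_⟩
  intro sp' hsp'sup hsp'1 hsp'2 hsp'3
  funext a
  apply le_antisymm
  · rw [main a]
    exact le_inf (hsp'1 a) (hsp'2 a)
  · have haeq : m (sp' a) a = a := by
      apply le_antisymm
      · calc m (sp' a) a ≤ m e a := mmonor a (hsp'1 a)
          _ = a := hel a
      · exact hsp'3 a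
    calc sp a = sp (m (sp' a) a) := by rw [haeq]
      _ ≤ sp (sp' a) := hstable _ _
      _ = sp' a := spfix _ (hsp'1 a)
end

section
/- Let Q be a supported quantale with support ς, let K be a stably supported quantale with support ς', and let h : Q → K be a homomorphism of unital involutive quantales, i.e. h preserves arbitrary suprema, h(a b) = h(a) h(b), h(e) = e, and h(a*) = h(a)*. Then h(ς a) = ς'(h a) for all a ∈ Q. -/

private lemma sSup_pres_mono {α β : Type*} [CompleteLattice α] [CompleteLattice β]
    (f : α → β) (hf : ∀ T : Set α, f (sSup T) = sSup (f '' T)) : Monotone f := by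
  intro a b hab
  have h1 : sSup ({a, b} : Set α) = b := by simp [sup_eq_right.mpr hab]
  have h2 : f a ⊔ f b = f b := by
    rw [← sSup_pair, ← Set.image_pair, ← hf, h1]
  exact le_sup_left.trans h2.le

/-- A homomorphism of unital involutive quantales from a supported quantale
to a stably supported quantale preserves the support (Theorem `thm:fullsubcat`-2). -/
theorem stmt_6 {Q : Type*} [CompleteLattice Q] {K : Type*} [CompleteLattice K]
    -- supported quantale Q
    (m : Q → Q → Q) (e : Q) (st : Q → Q) (sp : Q → Q)
    (hassoc : ∀ a b c : Q, m (m a b) c = m a (m b c))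
    (hdistl : ∀ (a : Q) (T : Set Q), m a (sSup T) = sSup ((fun b => m a b) '' T))
    (hdistr : ∀ (b : Q) (T : Set Q), m (sSup T) b = sSup ((fun a => m a b) '' T))
    (hel : ∀ a : Q, m e a = a) (her : ∀ a : Q, m a e = a)
    (hstsup : ∀ T : Set Q, st (sSup T) = sSup (st '' T))
    (hstst : ∀ a : Q, st (st a) = a)
    (hstm : ∀ a b : Q, st (m a b) = m (st b) (st a))
    (hspsup : ∀ T : Set Q, sp (sSup T) = sSup (sp '' T))
    (hsp1 : ∀ a : Q, sp a ≤ e)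
    (hsp2 : ∀ a : Q, sp a ≤ m a (st a))
    (hsp3 : ∀ a : Q, a ≤ m (sp a) a)
    -- stably supported quantale K
    (m' : K → K → K) (e' : K) (st' : K → K) (sp' : K → K)
    (hassoc' : ∀ a b c : K, m' (m' a b) c = m' a (m' b c))
    (hdistl' : ∀ (a : K) (T : Set K), m' a (sSup T) = sSup ((fun b => m' a b) '' T))
    (hdistr' : ∀ (b : K) (T : Set K), m' (sSup T) b = sSup ((fun a => m' a b) '' T))
    (hel' : ∀ a : K, m' e' a = a) (her' : ∀ a : K, m' a e' = a)
    (hstsup' : ∀ T : Set K, st' (sSup T) = sSup (st' '' T))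
    (hstst' : ∀ a : K, st' (st' a) = a)
    (hstm' : ∀ a b : K, st' (m' a b) = m' (st' b) (st' a))
    (hspsup' : ∀ T : Set K, sp' (sSup T) = sSup (sp' '' T))
    (hsp1' : ∀ a : K, sp' a ≤ e')
    (hsp2' : ∀ a : K, sp' a ≤ m' a (st' a))
    (hsp3' : ∀ a : K, a ≤ m' (sp' a) a)
    (hstable' : ∀ a b : K, sp' (m' a b) ≤ sp' a)
    -- homomorphism of unital involutive quantales
    (h : Q → K)
    (hhsup : ∀ T : Set Q, h (sSup T) = sSup (h '' T))
    (hhm : ∀ a b : Q, h (m a b) = m' (h a) (h b))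
    (hhe : h e = e')
    (hhst : ∀ a : Q, h (st a) = st' (h a)) :
    ∀ a : Q, h (sp a) = sp' (h a) := by
  have hmh : Monotone h := sSup_pres_mono h hhsup
  have hmsp' : Monotone sp' := sSup_pres_mono sp' hspsup'
  have hmst' : Monotone st' := sSup_pres_mono st' hstsup'
  have hmr : ∀ a : K, Monotone (m' a) := fun a => sSup_pres_mono (m' a) (hdistl' a)
  have hste : st' e' = e' := by
    have h1 : ∀ a : K, st' a = m' (st' a) (st' e') := by
      intro a; rw [← hstm' e' a, hel']
    have h2 := h1 (st' e')
    rw [hstst', hel'] at h2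
    exact h2.symm
  have hfix : ∀ b : K, b ≤ e' → sp' b = b := by
    intro b hb
    apply le_antisymm
    · calc sp' b ≤ m' b (st' b) := hsp2' b
        _ ≤ m' b e' := hmr b (by rw [← hste]; exact hmst' hb)
        _ = b := her' b
    · calc b ≤ m' (sp' b) b := hsp3' b
        _ ≤ m' (sp' b) e' := hmr _ hb
        _ = sp' b := her' _
  intro a
  have hle_e : h (sp a) ≤ e' := by rw [← hhe]; exact hmh (hsp1 a)
  apply le_antisymm
  · have h1 : h (sp a) ≤ m' (h a) (st' (h a)) := by
      have := hmh (hsp2 a)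
      rwa [hhm, hhst] at this
    calc h (sp a) = sp' (h (sp a)) := (hfix _ hle_e).symm
      _ ≤ sp' (m' (h a) (st' (h a))) := hmsp' h1
      _ ≤ sp' (h a) := hstable' _ _
  · have h1 : h a ≤ m' (h (sp a)) (h a) := by
      have := hmh (hsp3 a)
      rwa [hhm] at this
    calc sp' (h a) ≤ sp' (m' (h (sp a)) (h a)) := hmsp' h1
      _ ≤ sp' (h (sp a)) := hstable' _ _
      _ = h (sp a) := hfix _ hle_e
end

section
/- Let Q be a supported quantale with support ς and unit e, and let a be a partial unit of Q. Then: (i) ς a = a a*; (ii) a = a a* a; (iii) a a = a if and only if a ≤ e; (iv) for every b ∈ Q, b ≤ a if and only if b = (ς b) a. -/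
/-- A partial unit in a unital involutive quantale. -/
def IsPartialUnit {Q : Type*} [CompleteLattice Q]
    (m : Q → Q → Q) (e : Q) (st : Q → Q) (a : Q) : Prop :=
  m a (st a) ≤ e ∧ m (st a) a ≤ e

/-- Properties of partial units in a supported quantale (Lemma `prop:ipi`). -/
theorem stmt_7 {Q : Type*} [CompleteLattice Q]
    (m : Q → Q → Q) (e : Q) (st : Q → Q) (sp : Q → Q)
    (hassoc : ∀ a b c : Q, m (m a b) c = m a (m b c))
    (hdistl : ∀ (a : Q) (T : Set Q), m a (sSup T) = sSup ((fun b => m a b) '' T))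
    (hdistr : ∀ (b : Q) (T : Set Q), m (sSup T) b = sSup ((fun a => m a b) '' T))
    (hel : ∀ a : Q, m e a = a) (her : ∀ a : Q, m a e = a)
    (hstsup : ∀ T : Set Q, st (sSup T) = sSup (st '' T))
    (hstst : ∀ a : Q, st (st a) = a)
    (hstm : ∀ a b : Q, st (m a b) = m (st b) (st a))
    (hspsup : ∀ T : Set Q, sp (sSup T) = sSup (sp '' T))
    (hsp1 : ∀ a : Q, sp a ≤ e)
    (hsp2 : ∀ a : Q, sp a ≤ m a (st a))
    (hsp3 : ∀ a : Q, a ≤ m (sp a) a)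
    (a : Q) (ha : IsPartialUnit m e st a) :
    sp a = m a (st a) ∧
    a = m (m a (st a)) a ∧
    (m a a = a ↔ a ≤ e) ∧
    (∀ b : Q, b ≤ a ↔ b = m (sp b) a) := by
  obtain ⟨ha1, ha2⟩ := ha
  -- monotonicity of m in the right argument
  have monor : ∀ c x y : Q, x ≤ y → m c x ≤ m c y := by
    intro c x y hxy
    have h := hdistl c {x, y}
    rw [Set.image_pair, sSup_pair, sSup_pair, sup_eq_right.mpr hxy] at h
    rw [h]; exact le_sup_left
  have monol : ∀ c x y : Q, x ≤ y → m x c ≤ m y c := by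
    intro c x y hxy
    have h := hdistr c {x, y}
    rw [Set.image_pair, sSup_pair, sSup_pair, sup_eq_right.mpr hxy] at h
    rw [h]; exact le_sup_left
  have stmono : ∀ x y : Q, x ≤ y → st x ≤ st y := by
    intro x y hxy
    have h := hstsup {x, y}
    rw [Set.image_pair, sSup_pair, sSup_pair, sup_eq_right.mpr hxy] at h
    rw [h]; exact le_sup_left
  have hste : st e = e := by
    have h : st (st e) = m (st e) (st (st e)) := by
      conv_lhs => rw [← her (st e)]
      rw [hstm]
    rw [hstst, her] at h
    exact h.symm
  -- part (i)
  have part1 : sp a = m a (st a) := by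
    refine le_antisymm (hsp2 a) ?_
    calc m a (st a) ≤ m (m (sp a) a) (st a) := monol _ _ _ (hsp3 a)
      _ = m (sp a) (m a (st a)) := hassoc _ _ _
      _ ≤ m (sp a) e := monor _ _ _ ha1
      _ = sp a := her _
  -- part (ii)
  have part2 : a = m (m a (st a)) a := by
    refine le_antisymm ?_ ?_
    · calc a ≤ m (sp a) a := hsp3 a
        _ = m (m a (st a)) a := by rw [part1]
    · calc m (m a (st a)) a ≤ m e a := monol _ _ _ ha1
        _ = a := hel _
  -- part (iii)
  have part3 : m a a = a ↔ a ≤ e := by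
    constructor
    · intro h
      have hst : st a = m (st a) (st a) := by
        conv_lhs => rw [← h, hstm]
      calc a = m (m a (st a)) a := part2
        _ = m (m a (m (st a) (st a))) a := by rw [← hst]
        _ = m (m (m a (st a)) (st a)) a := by rw [hassoc a (st a) (st a)]
        _ = m (m a (st a)) (m (st a) a) := hassoc _ _ _
        _ ≤ m e (m (st a) a) := monol _ _ _ ha1
        _ = m (st a) a := hel _
        _ ≤ e := ha2
    · intro h
      have hsta : st a ≤ e := by
        calc st a ≤ st e := stmono _ _ h
          _ = e := hste
      refine le_antisymm ?_ ?_
      · calc m a a ≤ m a e := monor _ _ _ h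
          _ = a := her _
      · calc a = m (m a (st a)) a := part2
          _ ≤ m (m a e) a := monol _ _ _ (monor _ _ _ hsta)
          _ = m a a := by rw [her]
  -- part (iv)
  have part4 : ∀ b : Q, b ≤ a ↔ b = m (sp b) a := by
    intro b
    constructor
    · intro hb
      refine le_antisymm ?_ ?_
      · calc b ≤ m (sp b) b := hsp3 b
          _ ≤ m (sp b) a := monor _ _ _ hb
      · calc m (sp b) a ≤ m (m b (st b)) a := monol _ _ _ (hsp2 b)
          _ = m b (m (st b) a) := hassoc _ _ _
          _ ≤ m b (m (st a) a) := monor _ _ _ (monol _ _ _ (stmono _ _ hb))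
          _ ≤ m b e := monor _ _ _ ha2
          _ = b := her _
    · intro h
      calc b = m (sp b) a := h
        _ ≤ m e a := monol _ _ _ (hsp1 b)
        _ = a := hel _
  exact ⟨part1, part2, part3, part4⟩
end

section
/- Let Q be a supported quantale with support ς and unit e. Then the set Π(Q) of partial units contains e and is closed under multiplication and involution, and under the multiplication of Q it is an inverse monoid in which the inverse of a is a*: for every a ∈ Π(Q), a a* a = a and a* a a* = a*, and if b ∈ Π(Q) satisfies a b a = a and b a b = b then b = a*. Moreover, the idempotents of Π(Q) are exactly the partial units a with a ≤ e, and the natural order of the inverse monoid Π(Q) coincides with the order inherited from Q. -/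
/-- The partial units of a supported quantale form an inverse monoid
whose inversion is the involution, whose idempotents are the partial units below `e`,
and whose natural order coincides with the order of `Q` (Theorem `thm:ipiQ`-1). -/
theorem stmt_8 {Q : Type*} [CompleteLattice Q]
    (m : Q → Q → Q) (e : Q) (st : Q → Q) (sp : Q → Q)
    (hassoc : ∀ a b c : Q, m (m a b) c = m a (m b c))
    (hdistl : ∀ (a : Q) (T : Set Q), m a (sSup T) = sSup ((fun b => m a b) '' T))
    (hdistr : ∀ (b : Q) (T : Set Q), m (sSup T) b = sSup ((fun a => m a b) '' T))
    (hel : ∀ a : Q, m e a = a) (her : ∀ a : Q, m a e = a)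
    (hstsup : ∀ T : Set Q, st (sSup T) = sSup (st '' T))
    (hstst : ∀ a : Q, st (st a) = a)
    (hstm : ∀ a b : Q, st (m a b) = m (st b) (st a))
    (hspsup : ∀ T : Set Q, sp (sSup T) = sSup (sp '' T))
    (hsp1 : ∀ a : Q, sp a ≤ e)
    (hsp2 : ∀ a : Q, sp a ≤ m a (st a))
    (hsp3 : ∀ a : Q, a ≤ m (sp a) a) :
    IsPartialUnit m e st e ∧
    (∀ a b : Q, IsPartialUnit m e st a → IsPartialUnit m e st b →
      IsPartialUnit m e st (m a b)) ∧
    (∀ a : Q, IsPartialUnit m e st a → IsPartialUnit m e st (st a)) ∧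
    (∀ a : Q, IsPartialUnit m e st a →
      m (m a (st a)) a = a ∧ m (m (st a) a) (st a) = st a) ∧
    (∀ a b : Q, IsPartialUnit m e st a → IsPartialUnit m e st b →
      m (m a b) a = a → m (m b a) b = b → b = st a) ∧
    (∀ a : Q, IsPartialUnit m e st a → (m a a = a ↔ a ≤ e)) ∧
    (∀ a b : Q, IsPartialUnit m e st a → IsPartialUnit m e st b →
      ((∃ f : Q, IsPartialUnit m e st f ∧ m f f = f ∧ a = m f b) ↔ a ≤ b)) := by
  -- monotonicity of the multiplication in the right argument
  have hml : ∀ c x y : Q, x ≤ y → m c x ≤ m c y := by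
    intro c x y h
    have h2 := hdistl c {x, y}
    rw [Set.image_pair, sSup_pair, sSup_pair, sup_eq_right.mpr h] at h2
    rw [h2]; exact le_sup_left
  -- monotonicity of the multiplication in the left argument
  have hmr : ∀ c x y : Q, x ≤ y → m x c ≤ m y c := by
    intro c x y h
    have h2 := hdistr c {x, y}
    rw [Set.image_pair, sSup_pair, sSup_pair, sup_eq_right.mpr h] at h2
    rw [h2]; exact le_sup_left
  -- monotonicity of the involution
  have hstmono : ∀ x y : Q, x ≤ y → st x ≤ st y := by
    intro x y h
    have h2 := hstsup {x, y}
    rw [Set.image_pair, sSup_pair, sSup_pair, sup_eq_right.mpr h] at h2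
    rw [h2]; exact le_sup_left
  -- the key inequality a ≤ a a* a
  have haux : ∀ a : Q, a ≤ m a (m (st a) a) := by
    intro a
    calc a ≤ m (sp a) a := hsp3 a
      _ ≤ m (m a (st a)) a := hmr a _ _ (hsp2 a)
      _ = m a (m (st a) a) := hassoc _ _ _
  -- e is fixed by the involution
  have hspe : sp e = e := by
    refine le_antisymm (hsp1 e) ?_
    have h := hsp3 e
    rwa [her] at h
  have he_le : e ≤ st e := by
    calc e = sp e := hspe.symm
      _ ≤ m e (st e) := hsp2 e
      _ = st e := hel _
  have hste : st e = e := by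
    refine le_antisymm ?_ he_le
    have h := hstmono _ _ he_le
    rwa [hstst] at h
  -- e is a partial unit
  have Pe : IsPartialUnit m e st e := by
    constructor <;> rw [hste, hel]
  -- st preserves partial units
  have Pst : ∀ a : Q, IsPartialUnit m e st a → IsPartialUnit m e st (st a) := by
    intro a ha
    constructor
    · rw [hstst]; exact ha.2
    · rw [hstst]; exact ha.1
  -- products of partial units are partial units
  have Pmul : ∀ a b : Q, IsPartialUnit m e st a → IsPartialUnit m e st b →
      IsPartialUnit m e st (m a b) := by
    intro a b ha hb
    constructor
    · calc m (m a b) (st (m a b)) = m a (m (m b (st b)) (st a)) := by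
            rw [hstm]; simp only [hassoc]
        _ ≤ m a (m e (st a)) := hml _ _ _ (hmr _ _ _ hb.1)
        _ = m a (st a) := by rw [hel]
        _ ≤ e := ha.1
    · calc m (st (m a b)) (m a b) = m (st b) (m (m (st a) a) b) := by
            rw [hstm]; simp only [hassoc]
        _ ≤ m (st b) (m e b) := hml _ _ _ (hmr _ _ _ ha.2)
        _ = m (st b) b := by rw [hel]
        _ ≤ e := hb.2
  -- a a* a = a for partial units
  have hprim : ∀ a : Q, IsPartialUnit m e st a → m (m a (st a)) a = a := by
    intro a ha
    refine le_antisymm ?_ ?_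
    · calc m (m a (st a)) a ≤ m e a := hmr _ _ _ ha.1
        _ = a := hel a
    · calc a ≤ m a (m (st a) a) := haux a
        _ = m (m a (st a)) a := (hassoc _ _ _).symm
  have hprim2 : ∀ a : Q, IsPartialUnit m e st a → m (m (st a) a) (st a) = st a := by
    intro a ha
    have h := hprim (st a) (Pst a ha)
    rwa [hstst] at h
  -- idempotents among partial units are exactly those below e
  have Pidem : ∀ a : Q, IsPartialUnit m e st a → (m a a = a ↔ a ≤ e) := by
    intro f hf
    constructor
    · intro hidem
      have h1 : m (st f) f ≤ f := by
        have heq : m (st f) f = m (m (st f) f) f := by rw [hassoc, hidem]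
        calc m (st f) f = m (m (st f) f) f := heq
          _ ≤ m e f := hmr _ _ _ hf.2
          _ = f := hel f
      have h2 : st f ≤ e := by
        calc st f ≤ m (st f) (m f (st f)) := by
              have h := haux (st f); rwa [hstst] at h
          _ = m (m (st f) f) (st f) := (hassoc _ _ _).symm
          _ ≤ m f (st f) := hmr _ _ _ h1
          _ ≤ e := hf.1
      calc f = st (st f) := (hstst f).symm
        _ ≤ st e := hstmono _ _ h2
        _ = e := hste
    · intro hfe
      have h1 : f ≤ st f := by
        calc f ≤ m f (m (st f) f) := haux f
          _ ≤ m f (m (st f) e) := hml _ _ _ (hml _ _ _ hfe)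
          _ = m f (st f) := by rw [her]
          _ ≤ m e (st f) := hmr _ _ _ hfe
          _ = st f := hel _
      have hsf : st f ≤ f := by
        have h := hstmono _ _ h1
        rwa [hstst] at h
      refine le_antisymm ?_ ?_
      · calc m f f ≤ m e f := hmr _ _ _ hfe
          _ = f := hel f
      · calc f ≤ m f (m (st f) f) := haux f
          _ ≤ m f (m f f) := hml _ _ _ (hmr _ _ _ hsf)
          _ ≤ m f (m e f) := hml _ _ _ (hmr _ _ _ hfe)
          _ = m f f := by rw [hel]
  -- uniqueness of inverses
  have Puniq : ∀ a b : Q, IsPartialUnit m e st a → IsPartialUnit m e st b →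
      m (m a b) a = a → m (m b a) b = b → b = st a := by
    intro a b ha hb haba hbab
    have hab_pu := Pmul a b ha hb
    have hba_pu := Pmul b a hb ha
    have hab_idem : m (m a b) (m a b) = m a b := by
      calc m (m a b) (m a b) = m (m (m a b) a) b := (hassoc _ _ _).symm
        _ = m a b := by rw [haba]
    have hba_idem : m (m b a) (m b a) = m b a := by
      calc m (m b a) (m b a) = m (m (m b a) b) a := (hassoc _ _ _).symm
        _ = m b a := by rw [hbab]
    have hab_le : m a b ≤ e := (Pidem _ hab_pu).mp hab_idem
    have hba_le : m b a ≤ e := (Pidem _ hba_pu).mp hba_idem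
    have haba' : m a (m b a) = a := by
      rw [← hassoc]; exact haba
    have hle1 : b ≤ st a := by
      calc b = m (m b a) b := hbab.symm
        _ ≤ m (m b (m a (m (st a) a))) b := hmr _ _ _ (hml b _ _ (haux a))
        _ = m (m b a) (m (st a) (m a b)) := by simp only [hassoc]
        _ ≤ m e (m (st a) (m a b)) := hmr _ _ _ hba_le
        _ = m (st a) (m a b) := hel _
        _ ≤ m (st a) e := hml _ _ _ hab_le
        _ = st a := her _
    have hle2 : st a ≤ b := by
      calc st a = m (m (st a) a) (st a) := (hprim2 a ha).symm
        _ = m (m (st a) (m a (m b a))) (st a) := by rw [haba']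
        _ = m (m (st a) a) (m b (m a (st a))) := by simp only [hassoc]
        _ ≤ m e (m b (m a (st a))) := hmr _ _ _ ha.2
        _ = m b (m a (st a)) := hel _
        _ ≤ m b e := hml _ _ _ ha.1
        _ = b := her _
    exact le_antisymm hle1 hle2
  -- natural order coincides with the quantale order
  have Pord : ∀ a b : Q, IsPartialUnit m e st a → IsPartialUnit m e st b →
      ((∃ f : Q, IsPartialUnit m e st f ∧ m f f = f ∧ a = m f b) ↔ a ≤ b) := by
    intro a b ha hb
    constructor
    · rintro ⟨f, hf, hidem, rfl⟩
      have hfe : f ≤ e := (Pidem f hf).mp hidem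
      calc m f b ≤ m e b := hmr _ _ _ hfe
        _ = b := hel b
    · intro hle
      refine ⟨m a (st b), Pmul a (st b) ha (Pst b hb), ?_, ?_⟩
      · refine (Pidem _ (Pmul a (st b) ha (Pst b hb))).mpr ?_
        calc m a (st b) ≤ m b (st b) := hmr _ _ _ hle
          _ ≤ e := hb.1
      · refine le_antisymm ?_ ?_
        · calc a ≤ m a (m (st a) a) := haux a
            _ ≤ m a (m (st b) b) := hml _ _ _
                (le_trans (hmr a _ _ (hstmono _ _ hle)) (hml (st b) a b hle))
            _ = m (m a (st b)) b := (hassoc _ _ _).symm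
        · calc m (m a (st b)) b = m a (m (st b) b) := hassoc _ _ _
            _ ≤ m a e := hml _ _ _ hb.2
            _ = a := her _
  exact ⟨Pe, Pmul, Pst, fun a ha => ⟨hprim a ha, hprim2 a ha⟩, Puniq, Pidem, Pord⟩
end

section
/- Let Q be a unital involutive quantale in which every element is the join of the partial units below it, and define ς : Q → Q by ς a = ⨆{ b b* : b ∈ Π(Q), b ≤ a }. Then ς is a support on Q if and only if (i) a ≤ a a* a for all a ∈ Q and (ii) ς preserves arbitrary suprema. Moreover, Q admits a support if and only if conditions (i) and (ii) hold. -/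
/-- The candidate support `ς a = ⨆{ b b* : b ∈ Π(Q), b ≤ a }`. -/
def suppCand {Q : Type*} [CompleteLattice Q]
    (m : Q → Q → Q) (e : Q) (st : Q → Q) (a : Q) : Q :=
  sSup ((fun b => m b (st b)) '' {b : Q | IsPartialUnit m e st b ∧ b ≤ a})

/-- For a unital involutive quantale in which every element is the join of
the partial units below it, the candidate `ς` is a support iff `a ≤ a a* a` holds and `ς`
preserves suprema; moreover a support exists iff these two conditions hold
(Lemma `thm:inversequantale`). -/
theorem stmt_9 {Q : Type*} [CompleteLattice Q]
    (m : Q → Q → Q) (e : Q) (st : Q → Q)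
    (hassoc : ∀ a b c : Q, m (m a b) c = m a (m b c))
    (hdistl : ∀ (a : Q) (T : Set Q), m a (sSup T) = sSup ((fun b => m a b) '' T))
    (hdistr : ∀ (b : Q) (T : Set Q), m (sSup T) b = sSup ((fun a => m a b) '' T))
    (hel : ∀ a : Q, m e a = a) (her : ∀ a : Q, m a e = a)
    (hstsup : ∀ T : Set Q, st (sSup T) = sSup (st '' T))
    (hstst : ∀ a : Q, st (st a) = a)
    (hstm : ∀ a b : Q, st (m a b) = m (st b) (st a))
    (hjoin : ∀ a : Q, a = sSup {b : Q | IsPartialUnit m e st b ∧ b ≤ a}) :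
    (((∀ T : Set Q, suppCand m e st (sSup T) = sSup (suppCand m e st '' T)) ∧
      (∀ a : Q, suppCand m e st a ≤ e) ∧
      (∀ a : Q, suppCand m e st a ≤ m a (st a)) ∧
      (∀ a : Q, a ≤ m (suppCand m e st a) a)) ↔
     ((∀ a : Q, a ≤ m (m a (st a)) a) ∧
      (∀ T : Set Q, suppCand m e st (sSup T) = sSup (suppCand m e st '' T)))) ∧
    ((∃ sp : Q → Q,
      (∀ T : Set Q, sp (sSup T) = sSup (sp '' T)) ∧
      (∀ a : Q, sp a ≤ e) ∧
      (∀ a : Q, sp a ≤ m a (st a)) ∧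
      (∀ a : Q, a ≤ m (sp a) a)) ↔
     ((∀ a : Q, a ≤ m (m a (st a)) a) ∧
      (∀ T : Set Q, suppCand m e st (sSup T) = sSup (suppCand m e st '' T)))) := by
  -- monotonicity lemmas
  have mmonol : ∀ {a b : Q} (c : Q), a ≤ b → m a c ≤ m b c := by
    intro a b c h
    have h1 : m b c = sSup ((fun x => m x c) '' {a, b}) := by
      rw [← hdistr]
      congr 1
      rw [sSup_pair, sup_eq_right.mpr h]
    rw [h1]
    exact le_sSup ⟨a, by simp, rfl⟩
  have mmonor : ∀ (c : Q) {a b : Q}, a ≤ b → m c a ≤ m c b := by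
    intro c a b h
    have h1 : m c b = sSup ((fun x => m c x) '' {a, b}) := by
      rw [← hdistl]
      congr 1
      rw [sSup_pair, sup_eq_right.mpr h]
    rw [h1]
    exact le_sSup ⟨a, by simp, rfl⟩
  have stmono : ∀ {a b : Q}, a ≤ b → st a ≤ st b := by
    intro a b h
    have h1 : st b = sSup (st '' {a, b}) := by
      rw [← hstsup]
      congr 1
      rw [sSup_pair, sup_eq_right.mpr h]
    rw [h1]
    exact le_sSup ⟨a, by simp, rfl⟩
  -- ς a ≤ e (always)
  have h_e : ∀ a : Q, suppCand m e st a ≤ e := by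
    intro a
    apply sSup_le
    rintro x ⟨b, ⟨hb, _⟩, rfl⟩
    exact hb.1
  -- ς a ≤ a a* (always)
  have h_aa : ∀ a : Q, suppCand m e st a ≤ m a (st a) := by
    intro a
    apply sSup_le
    rintro x ⟨b, ⟨hb, hba⟩, rfl⟩
    exact le_trans (mmonol _ hba) (mmonor _ (stmono hba))
  -- (i) implies a ≤ ς a · a
  have key : (∀ a : Q, a ≤ m (m a (st a)) a) →
      ∀ a : Q, a ≤ m (suppCand m e st a) a := by
    intro hi a
    conv_lhs => rw [hjoin a]
    apply sSup_le
    rintro b ⟨hb, hba⟩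
    calc b ≤ m (m b (st b)) b := hi b
      _ ≤ m (suppCand m e st a) a := by
          have hb1 : m b (st b) ≤ suppCand m e st a := le_sSup ⟨b, ⟨hb, hba⟩, rfl⟩
          exact le_trans (mmonol b hb1) (mmonor _ hba)
  have key2 : (∀ a : Q, a ≤ m (suppCand m e st a) a) →
      ∀ a : Q, a ≤ m (m a (st a)) a := by
    intro h a
    exact le_trans (h a) (mmonol _ (h_aa a))
  constructor
  · constructor
    · rintro ⟨hsup, _, _, h4⟩
      exact ⟨key2 h4, hsup⟩
    · rintro ⟨hi, hsup⟩
      exact ⟨hsup, h_e, h_aa, key hi⟩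
  · constructor
    · rintro ⟨sp, hsp1, hsp2, hsp3, hsp4⟩
      have spmono : ∀ {a b : Q}, a ≤ b → sp a ≤ sp b := by
        intro a b h
        have h1 : sp b = sSup (sp '' {a, b}) := by
          rw [← hsp1]
          congr 1
          rw [sSup_pair, sup_eq_right.mpr h]
        rw [h1]
        exact le_sSup ⟨a, by simp, rfl⟩
      have heq : ∀ a : Q, suppCand m e st a = sp a := by
        intro a
        apply le_antisymm
        · apply sSup_le
          rintro x ⟨b, ⟨hb, hba⟩, rfl⟩
          calc m b (st b) ≤ m (m (sp b) b) (st b) := mmonol _ (hsp4 b)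
            _ = m (sp b) (m b (st b)) := hassoc _ _ _
            _ ≤ m (sp b) e := mmonor _ hb.1
            _ = sp b := her _
            _ ≤ sp a := spmono hba
        · have h1 := hsp1 {b : Q | IsPartialUnit m e st b ∧ b ≤ a}
          rw [← hjoin a] at h1
          rw [h1]
          apply sSup_le
          rintro x ⟨b, ⟨hb, hba⟩, rfl⟩
          exact le_trans (hsp3 b) (le_sSup ⟨b, ⟨hb, hba⟩, rfl⟩)
      have hi : ∀ a : Q, a ≤ m (m a (st a)) a := fun a =>
        le_trans (hsp4 a) (mmonol _ (hsp3 a))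
      refine ⟨hi, ?_⟩
      intro T
      rw [heq (sSup T), hsp1 T]
      congr 1
      ext x
      constructor
      · rintro ⟨b, hb, rfl⟩; exact ⟨b, hb, heq b⟩
      · rintro ⟨b, hb, rfl⟩; exact ⟨b, hb, (heq b).symm⟩
    · rintro ⟨hi, hsup⟩
      exact ⟨suppCand m e st, hsup, h_e, h_aa, key hi⟩
end

section
/- Every inverse quantale is stably supported: if Q is a supported quantale with support ς in which every element is a join of partial units, then ς(a b) ≤ ς a for all a, b ∈ Q. -/
/-- Every inverse quantale is stably supported
(Lemma `thm:invimpliesss`). -/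
theorem stmt_10 {Q : Type*} [CompleteLattice Q]
    (m : Q → Q → Q) (e : Q) (st : Q → Q) (sp : Q → Q)
    (hassoc : ∀ a b c : Q, m (m a b) c = m a (m b c))
    (hdistl : ∀ (a : Q) (T : Set Q), m a (sSup T) = sSup ((fun b => m a b) '' T))
    (hdistr : ∀ (b : Q) (T : Set Q), m (sSup T) b = sSup ((fun a => m a b) '' T))
    (hel : ∀ a : Q, m e a = a) (her : ∀ a : Q, m a e = a)
    (hstsup : ∀ T : Set Q, st (sSup T) = sSup (st '' T))
    (hstst : ∀ a : Q, st (st a) = a)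
    (hstm : ∀ a b : Q, st (m a b) = m (st b) (st a))
    (hspsup : ∀ T : Set Q, sp (sSup T) = sSup (sp '' T))
    (hsp1 : ∀ a : Q, sp a ≤ e)
    (hsp2 : ∀ a : Q, sp a ≤ m a (st a))
    (hsp3 : ∀ a : Q, a ≤ m (sp a) a)
    (hjoin : ∀ a : Q, a = sSup {b : Q | IsPartialUnit m e st b ∧ b ≤ a}) :
    ∀ a b : Q, sp (m a b) ≤ sp a := by
  -- monotonicity of m in the left argument
  have hml : ∀ c x y : Q, x ≤ y → m x c ≤ m y c := by
    intro c x y hxy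
    have hs : sSup {x, y} = y := by
      rw [sSup_pair, sup_eq_right.mpr hxy]
    have h := hdistr c {x, y}
    rw [hs, Set.image_pair, sSup_pair] at h
    rw [h]; exact le_sup_left
  -- monotonicity of m in the right argument
  have hmr : ∀ c x y : Q, x ≤ y → m c x ≤ m c y := by
    intro c x y hxy
    have hs : sSup {x, y} = y := by
      rw [sSup_pair, sup_eq_right.mpr hxy]
    have h := hdistl c {x, y}
    rw [hs, Set.image_pair, sSup_pair] at h
    rw [h]; exact le_sup_left
  -- monotonicity of sp
  have hspm : ∀ x y : Q, x ≤ y → sp x ≤ sp y := by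
    intro x y hxy
    have hs : sSup {x, y} = y := by
      rw [sSup_pair, sup_eq_right.mpr hxy]
    have h := hspsup {x, y}
    rw [hs, Set.image_pair, sSup_pair] at h
    rw [h]; exact le_sup_left
  intro a b
  -- key: for partial units t ≤ a and s ≤ b, sp (m t s) ≤ sp a
  have key : ∀ t : Q, IsPartialUnit m e st t → t ≤ a →
      ∀ s : Q, IsPartialUnit m e st s → sp (m t s) ≤ sp a := by
    intro t ht hta s hs
    have h1 : sp (m t s) ≤ m t (st t) := by
      calc sp (m t s) ≤ m (m t s) (st (m t s)) := hsp2 _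
        _ = m t (m (m s (st s)) (st t)) := by rw [hstm, hassoc, ← hassoc s]
        _ ≤ m t (m e (st t)) := hmr _ _ _ (hml _ _ _ hs.1)
        _ = m t (st t) := by rw [hel]
    have h2 : m t (st t) ≤ sp t := by
      calc m t (st t) ≤ m (m (sp t) t) (st t) := hml _ _ _ (hsp3 t)
        _ = m (sp t) (m t (st t)) := hassoc _ _ _
        _ ≤ m (sp t) e := hmr _ _ _ ht.1
        _ = sp t := her _
    exact le_trans h1 (le_trans h2 (hspm _ _ hta))
  -- decompose a
  have hA : m a b = sSup ((fun t => m t b) ''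
      {t : Q | IsPartialUnit m e st t ∧ t ≤ a}) := by
    calc m a b = m (sSup {t : Q | IsPartialUnit m e st t ∧ t ≤ a}) b := by
          rw [← hjoin a]
      _ = _ := hdistr b _
  rw [hA, hspsup]
  apply sSup_le
  rintro _ ⟨_, ⟨t, ⟨ht, hta⟩, rfl⟩, rfl⟩
  -- decompose b
  have hB : m t b = sSup ((fun s => m t s) ''
      {s : Q | IsPartialUnit m e st s ∧ s ≤ b}) := by
    calc m t b = m t (sSup {s : Q | IsPartialUnit m e st s ∧ s ≤ b}) := by
          rw [← hjoin b]
      _ = _ := hdistl t _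
  show sp (m t b) ≤ sp a
  rw [hB, hspsup]
  apply sSup_le
  rintro _ ⟨_, ⟨s, ⟨hs, _⟩, rfl⟩, rfl⟩
  exact key t ht hta s hs
end

section
/- Let S be an inverse semigroup. Then ℒ(S), the complete lattice of downwards closed subsets of S ordered by inclusion, is an inverse quantale with: pointwise multiplication X Y = { x y : x ∈ X, y ∈ Y } (in particular the pointwise product of two downwards closed sets is downwards closed, this multiplication is associative and distributes over arbitrary unions in each variable), multiplicative unit E(S), involution X* = { x⁻¹ : x ∈ X }, and support ς X = { x x⁻¹ : x ∈ X } satisfying ς X ⊆ E(S), ς X ⊆ X X*, X ⊆ (ς X) X, and preserving arbitrary unions; moreover every element of ℒ(S) is a union of partial units of ℒ(S). -/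
open scoped Pointwise

/-- The natural order of an inverse semigroup: `x ≤ y` iff `x = f y` for some idempotent. -/
def InvNatLe {S : Type*} [Mul S] (x y : S) : Prop :=
  ∃ f : S, f * f = f ∧ x = f * y

/-- A subset downwards closed in the natural order. -/
def InvDwClosed {S : Type*} [Mul S] (X : Set S) : Prop :=
  ∀ x y : S, InvNatLe x y → y ∈ X → x ∈ X

private lemma aux_cmul {S : Type*} [Semigroup S] {a b c : S} (h : a * b = c) (y : S) :
    a * (b * y) = c * y := by rw [← mul_assoc, h]

/-- For an inverse semigroup `S`, the downwards closed subsets form an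
inverse quantale `ℒ(S)` under pointwise multiplication, with unit `E(S)`, pointwise
inversion as involution, and support `ς X = { x x⁻¹ : x ∈ X }`; moreover every downwards
closed set is a union of partial units (Lemma `lemma:invqfrominvs`). -/
theorem stmt_11 {S : Type*} [Semigroup S] (inv : S → S)
    (hinv1 : ∀ x : S, x * inv x * x = x)
    (hinv2 : ∀ x : S, inv x * x * inv x = inv x)
    (hinvuniq : ∀ x y : S, x * y * x = x → y * x * y = y → y = inv x) :
    -- pointwise product of downwards closed sets is downwards closed
    (∀ X Y : Set S, InvDwClosed X → InvDwClosed Y → InvDwClosed (X * Y)) ∧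
    -- multiplication is associative and distributes over arbitrary unions in each variable
    (∀ X Y Z : Set S, (X * Y) * Z = X * (Y * Z)) ∧
    (∀ (T : Set (Set S)) (Y : Set S), (⋃₀ T) * Y = ⋃ X ∈ T, X * Y) ∧
    (∀ (X : Set S) (T : Set (Set S)), X * (⋃₀ T) = ⋃ Y ∈ T, X * Y) ∧
    -- the set of idempotents is a downwards closed two-sided unit
    InvDwClosed {f : S | f * f = f} ∧
    (∀ X : Set S, InvDwClosed X → X * {f : S | f * f = f} = X) ∧
    (∀ X : Set S, InvDwClosed X → {f : S | f * f = f} * X = X) ∧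
    -- pointwise inversion is an involution on ℒ(S)
    (∀ X : Set S, InvDwClosed X → InvDwClosed (inv '' X)) ∧
    (∀ X : Set S, inv '' (inv '' X) = X) ∧
    (∀ X Y : Set S, inv '' (X * Y) = (inv '' Y) * (inv '' X)) ∧
    (∀ T : Set (Set S), inv '' ⋃₀ T = ⋃ X ∈ T, inv '' X) ∧
    -- the support ς X = { x x⁻¹ : x ∈ X }
    (∀ X : Set S, InvDwClosed X → InvDwClosed ((fun x => x * inv x) '' X)) ∧
    (∀ X : Set S, InvDwClosed X → (fun x => x * inv x) '' X ⊆ {f : S | f * f = f}) ∧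
    (∀ X : Set S, InvDwClosed X → (fun x => x * inv x) '' X ⊆ X * (inv '' X)) ∧
    (∀ X : Set S, InvDwClosed X → X ⊆ ((fun x => x * inv x) '' X) * X) ∧
    (∀ T : Set (Set S), (fun x => x * inv x) '' ⋃₀ T = ⋃ X ∈ T, (fun x => x * inv x) '' X) ∧
    -- every downwards closed set is a union of partial units
    (∀ X : Set S, InvDwClosed X →
      X = ⋃₀ {U : Set S | InvDwClosed U ∧ U ⊆ X ∧
        U * (inv '' U) ⊆ {f : S | f * f = f} ∧ (inv '' U) * U ⊆ {f : S | f * f = f}}) := by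
  -- basic facts about inverse semigroups
  have ii : ∀ x : S, inv (inv x) = x := fun x =>
    (hinvuniq (inv x) x (hinv2 x) (hinv1 x)).symm
  have einv : ∀ f : S, f * f = f → inv f = f := fun f hf =>
    (hinvuniq f f (by rw [hf, hf]) (by rw [hf, hf])).symm
  have pidem : ∀ x : S, (x * inv x) * (x * inv x) = x * inv x := fun x => by
    have := congrArg (· * inv x) (hinv1 x); simpa [mul_assoc] using this
  have qidem : ∀ x : S, (inv x * x) * (inv x * x) = inv x * x := fun x => by
    have := congrArg (inv x * ·) (hinv1 x); simpa [mul_assoc] using this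
  -- product of idempotents is idempotent
  have emul : ∀ e f : S, e * e = e → f * f = f → (e * f) * (e * f) = e * f := by
    intro e f he hf
    have h1' := hinv1 (e * f)
    simp only [mul_assoc] at h1'
    have h2' := hinv2 (e * f)
    simp only [mul_assoc] at h2'
    have h2'' : ∀ y : S, inv (e * f) * (e * (f * (inv (e * f) * y))) = inv (e * f) * y :=
      fun y => by
        rw [show inv (e * f) * (e * (f * (inv (e * f) * y)))
              = inv (e * f) * (e * (f * inv (e * f))) * y by simp only [mul_assoc], h2']
    have key1 : (e * f) * (f * (inv (e * f) * e)) * (e * f) = e * f := by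
      simp only [mul_assoc]
      rw [aux_cmul hf, aux_cmul he]
      exact h1'
    have key2 : (f * (inv (e * f) * e)) * (e * f) * (f * (inv (e * f) * e))
        = f * (inv (e * f) * e) := by
      simp only [mul_assoc]
      rw [aux_cmul he, aux_cmul hf, h2'' e]
    have hw : f * (inv (e * f) * e) = inv (e * f) := hinvuniq (e * f) _ key1 key2
    have hzz : inv (e * f) * inv (e * f) = inv (e * f) := by
      have h3 : (f * (inv (e * f) * e)) * (f * (inv (e * f) * e)) = f * (inv (e * f) * e) := by
        simp only [mul_assoc]
        rw [h2'' e]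
      rw [hw] at h3; exact h3
    have hez : e * f = inv (e * f) := by
      conv_lhs => rw [← ii (e * f)]
      rw [einv (inv (e * f)) hzz]
    rw [hez]; exact hzz
  -- idempotents commute
  have ecomm : ∀ e f : S, e * e = e → f * f = f → e * f = f * e := by
    intro e f he hf
    have hef := emul e f he hf
    have hfe := emul f e hf he
    have k1 : (e * f) * (f * e) * (e * f) = e * f := by
      simp only [mul_assoc]
      rw [aux_cmul hf, aux_cmul he]
      have := hef; simp only [mul_assoc] at this; exact this
    have k2 : (f * e) * (e * f) * (f * e) = f * e := by
      simp only [mul_assoc]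
      rw [aux_cmul he, aux_cmul hf]
      have := hfe; simp only [mul_assoc] at this; exact this
    have h4 : f * e = inv (e * f) := hinvuniq (e * f) (f * e) k1 k2
    rw [h4, einv (e * f) hef]
  -- inversion is an antihomomorphism
  have ianti : ∀ x y : S, inv (x * y) = inv y * inv x := by
    have H : ∀ a b : S, (a * b) * (inv b * inv a) * (a * b) = a * b := by
      intro a b
      calc (a * b) * (inv b * inv a) * (a * b)
          = a * ((b * inv b) * ((inv a * a) * b)) := by simp only [mul_assoc]
        _ = a * (((b * inv b) * (inv a * a)) * b) := by
            rw [← mul_assoc (b * inv b) (inv a * a) b]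
        _ = a * (((inv a * a) * (b * inv b)) * b) := by
            rw [ecomm _ _ (pidem b) (qidem a)]
        _ = a * ((inv a * a) * ((b * inv b) * b)) := by
            rw [mul_assoc (inv a * a) (b * inv b) b]
        _ = a * ((inv a * a) * b) := by rw [hinv1 b]
        _ = a * b := by rw [← mul_assoc a (inv a * a) b, ← mul_assoc a (inv a) a, hinv1 a]
    intro x y
    refine (hinvuniq (x * y) (inv y * inv x) (H x y) ?_).symm
    have := H (inv y) (inv x)
    rwa [ii, ii] at this
  -- natural order facts
  have lerefl : ∀ x : S, InvNatLe x x := fun x => ⟨x * inv x, pidem x, (hinv1 x).symm⟩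
  have letrans : ∀ x y z : S, InvNatLe x y → InvNatLe y z → InvNatLe x z := by
    rintro x y z ⟨f, hf, rfl⟩ ⟨g, hg, rfl⟩
    exact ⟨f * g, emul f g hf hg, (mul_assoc f g z).symm⟩
  have leleft : ∀ x y g : S, g * g = g → x = y * g → InvNatLe x y := by
    intro x y g hg hx
    have swap2 : (inv y * y) * (g * inv y) = g * inv y := by
      calc (inv y * y) * (g * inv y) = ((inv y * y) * g) * inv y :=
            (mul_assoc _ _ _).symm
        _ = (g * (inv y * y)) * inv y := by rw [ecomm _ _ (qidem y) hg]
        _ = g * inv y := by rw [mul_assoc g (inv y * y) (inv y), hinv2 y]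
    refine ⟨y * (g * inv y), ?_, ?_⟩
    · calc (y * (g * inv y)) * (y * (g * inv y))
          = y * (g * ((inv y * y) * (g * inv y))) := by simp only [mul_assoc]
        _ = y * (g * (g * inv y)) := by rw [swap2]
        _ = y * (g * inv y) := by rw [aux_cmul hg]
    · rw [hx]
      calc y * g = y * ((inv y * y) * g) := by
            rw [← mul_assoc y (inv y * y) g, ← mul_assoc y (inv y) y, hinv1 y]
        _ = y * (g * (inv y * y)) := by rw [ecomm _ _ (qidem y) hg]
        _ = (y * (g * inv y)) * y := by simp only [mul_assoc]
  -- E is downwards closed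
  have Edw : InvDwClosed {f : S | f * f = f} := by
    rintro x y ⟨f, hf, rfl⟩ hy
    exact emul f y hf hy
  -- support element facts
  refine ⟨?_, ?_, ?_, ?_, Edw, ?_, ?_, ?_, ?_, ?_, ?_, ?_, ?_, ?_, ?_, ?_, ?_⟩
  · -- product of dw closed is dw closed
    rintro X Y hX hY x y ⟨f, hf, rfl⟩ hy
    rcases hy with ⟨a, ha, b, hb, rfl⟩
    have : f * (a * b) = (f * a) * b := (mul_assoc f a b).symm
    rw [this]
    exact Set.mul_mem_mul (hX (f * a) a ⟨f, hf, rfl⟩ ha) hb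
  · exact fun X Y Z => mul_assoc X Y Z
  · exact fun T Y => Set.sUnion_mul T Y
  · exact fun X T => Set.mul_sUnion X T
  · -- X * E = X
    intro X hX
    apply Set.Subset.antisymm
    · rintro z ⟨a, ha, b, hb, rfl⟩
      exact hX (a * b) a (leleft (a * b) a b hb rfl) ha
    · intro x hx
      have h := Set.mul_mem_mul hx (show inv x * x ∈ {f : S | f * f = f} from qidem x)
      rwa [show x * (inv x * x) = x by rw [← mul_assoc, hinv1 x]] at h
  · -- E * X = X
    intro X hX
    apply Set.Subset.antisymm
    · rintro z ⟨f, hf, b, hb, rfl⟩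
      exact hX (f * b) b ⟨f, hf, rfl⟩ hb
    · intro x hx
      have h := Set.mul_mem_mul (show x * inv x ∈ {f : S | f * f = f} from pidem x) hx
      rwa [hinv1 x] at h
  · -- inv '' X dw closed
    rintro X hX x y ⟨f, hf, rfl⟩ hy
    rcases hy with ⟨a, ha, rfl⟩
    refine ⟨a * f, hX (a * f) a (leleft (a * f) a f hf rfl) ha, ?_⟩
    rw [ianti, einv f hf]
  · -- involution
    intro X
    ext x
    constructor
    · rintro ⟨y, ⟨z, hz, rfl⟩, rfl⟩
      rwa [ii]
    · intro hx
      exact ⟨inv x, ⟨x, hx, rfl⟩, ii x⟩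
  · -- antihomomorphism on sets
    intro X Y
    ext z
    constructor
    · rintro ⟨w, ⟨a, ha, b, hb, rfl⟩, rfl⟩
      rw [ianti]
      exact Set.mul_mem_mul ⟨b, hb, rfl⟩ ⟨a, ha, rfl⟩
    · rintro ⟨w, ⟨b, hb, rfl⟩, v, ⟨a, ha, rfl⟩, rfl⟩
      exact ⟨a * b, Set.mul_mem_mul ha hb, ianti a b⟩
  · -- image of sUnion
    intro T
    simp [Set.sUnion_eq_biUnion, Set.image_iUnion]
  · -- support is dw closed
    rintro X hX x y hxy hy
    rcases hy with ⟨a, ha, rfl⟩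
    rcases hxy with ⟨f, hf, hxeq⟩
    have hxx : x * x = x := by rw [hxeq]; exact emul _ _ hf (pidem a)
    have hx5 : x * (a * inv a) = x := by
      rw [hxeq, mul_assoc f (a * inv a) (a * inv a), pidem a]
    have h5 : (a * inv a) * x = x := by rw [ecomm _ _ (pidem a) hxx]; exact hx5
    refine ⟨x * a, hX (x * a) a ⟨x, hxx, rfl⟩ ha, ?_⟩
    show (x * a) * inv (x * a) = x
    calc (x * a) * inv (x * a) = (x * a) * (inv a * inv x) := by rw [ianti]
      _ = (x * a) * (inv a * x) := by rw [einv x hxx]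
      _ = x * ((a * inv a) * x) := by simp only [mul_assoc]
      _ = x * x := by rw [h5]
      _ = x := hxx
  · -- support lands in E
    rintro X hX z ⟨a, ha, rfl⟩
    exact pidem a
  · -- ς X ⊆ X * X*
    rintro X hX z ⟨a, ha, rfl⟩
    exact Set.mul_mem_mul ha ⟨a, ha, rfl⟩
  · -- X ⊆ ς X * X
    intro X hX x hx
    have h := Set.mul_mem_mul (show x * inv x ∈ (fun x => x * inv x) '' X from ⟨x, hx, rfl⟩) hx
    rwa [hinv1 x] at h
  · -- support of sUnion
    intro T
    simp [Set.sUnion_eq_biUnion, Set.image_iUnion]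
  · -- every dw closed set is a union of partial units
    intro X hX
    apply Set.Subset.antisymm
    · intro x hx
      refine Set.mem_sUnion.mpr ⟨{z | InvNatLe z x}, ⟨?_, ?_, ?_, ?_⟩, lerefl x⟩
      · exact fun a b hab hb => letrans a b x hab hb
      · exact fun z hz => hX z x hz hx
      · rintro w ⟨a, haU, v, ⟨b, hbU, rfl⟩, rfl⟩
        rcases haU with ⟨f, hf, rfl⟩
        rcases hbU with ⟨g, hg, rfl⟩
        have he : (f * x) * inv (g * x) = f * ((x * inv x) * g) := by
          rw [ianti, einv g hg]; simp only [mul_assoc]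
        show ((f * x) * inv (g * x)) * ((f * x) * inv (g * x)) = (f * x) * inv (g * x)
        rw [he]
        exact emul f _ hf (emul _ g (pidem x) hg)
      · rintro w ⟨v, ⟨a, haU, rfl⟩, b, hbU, rfl⟩
        rcases haU with ⟨f, hf, rfl⟩
        rcases hbU with ⟨g, hg, rfl⟩
        have claim : ∀ h : S, h * h = h →
            (inv x * (h * x)) * (inv x * (h * x)) = inv x * (h * x) := by
          intro h hh
          have k : (x * inv x) * (h * x) = h * x := by
            rw [← mul_assoc (x * inv x) h x, ecomm _ _ (pidem x) hh,
              mul_assoc h (x * inv x) x, hinv1 x]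
          calc (inv x * (h * x)) * (inv x * (h * x))
              = inv x * (h * ((x * inv x) * (h * x))) := by simp only [mul_assoc]
            _ = inv x * (h * (h * x)) := by rw [k]
            _ = inv x * (h * x) := by rw [aux_cmul hh]
        have he : inv (f * x) * (g * x) = inv x * ((f * g) * x) := by
          rw [ianti, einv f hf]; simp only [mul_assoc]
        show (inv (f * x) * (g * x)) * (inv (f * x) * (g * x)) = inv (f * x) * (g * x)
        rw [he]
        exact claim (f * g) (emul f g hf hg)
    · rintro x ⟨U, ⟨-, hUX, -, -⟩, hxU⟩
      exact hUX hxU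
end

section
/- Let S be an inverse monoid, let Q be a stably supported quantale, and let h : S → Π(Q) be a monoid homomorphism. Then the map h̄ : ℒ(S) → Q defined by h̄(U) = ⨆_{s ∈ U} h(s) is a homomorphism of unital involutive quantales (it preserves arbitrary suprema, multiplication, the unit, and the involution) satisfying h̄(↓s) = h(s) for all s ∈ S, and it is the unique such homomorphism. -/
open scoped Pointwise

/-- a monoid homomorphism `h : S → Π(Q)` from an inverse monoid to the
partial units of a stably supported quantale extends uniquely to a homomorphism of unital
involutive quantales `h̄ : ℒ(S) → Q`, `h̄ U = ⨆_{s ∈ U} h s`, with `h̄(↓s) = h s`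
(Theorem `thm:LS`). -/
theorem stmt_12 {S : Type*} [Monoid S] (inv : S → S)
    (hinv1 : ∀ x : S, x * inv x * x = x)
    (hinv2 : ∀ x : S, inv x * x * inv x = inv x)
    (hinvuniq : ∀ x y : S, x * y * x = x → y * x * y = y → y = inv x)
    {Q : Type*} [CompleteLattice Q]
    (m : Q → Q → Q) (e : Q) (st : Q → Q) (sp : Q → Q)
    (hassoc : ∀ a b c : Q, m (m a b) c = m a (m b c))
    (hdistl : ∀ (a : Q) (T : Set Q), m a (sSup T) = sSup ((fun b => m a b) '' T))
    (hdistr : ∀ (b : Q) (T : Set Q), m (sSup T) b = sSup ((fun a => m a b) '' T))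
    (hel : ∀ a : Q, m e a = a) (her : ∀ a : Q, m a e = a)
    (hstsup : ∀ T : Set Q, st (sSup T) = sSup (st '' T))
    (hstst : ∀ a : Q, st (st a) = a)
    (hstm : ∀ a b : Q, st (m a b) = m (st b) (st a))
    (hspsup : ∀ T : Set Q, sp (sSup T) = sSup (sp '' T))
    (hsp1 : ∀ a : Q, sp a ≤ e)
    (hsp2 : ∀ a : Q, sp a ≤ m a (st a))
    (hsp3 : ∀ a : Q, a ≤ m (sp a) a)
    (hstable : ∀ a b : Q, sp (m a b) ≤ sp a)
    -- a monoid homomorphism h : S → Π(Q)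
    (h : S → Q)
    (hpu : ∀ s : S, IsPartialUnit m e st (h s))
    (hone : h 1 = e)
    (hmul : ∀ s t : S, h (s * t) = m (h s) (h t)) :
    -- h̄ U = ⨆ (h '' U) is a homomorphism of unital involutive quantales on ℒ(S)
    (∀ T : Set (Set S), (∀ U ∈ T, InvDwClosed U) →
      sSup (h '' ⋃₀ T) = ⨆ U ∈ T, sSup (h '' U)) ∧
    (∀ U V : Set S, InvDwClosed U → InvDwClosed V →
      sSup (h '' (U * V)) = m (sSup (h '' U)) (sSup (h '' V))) ∧
    sSup (h '' {f : S | f * f = f}) = e ∧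
    (∀ U : Set S, InvDwClosed U → sSup (h '' (inv '' U)) = st (sSup (h '' U))) ∧
    -- it extends h along principal downward closed sets
    (∀ s : S, sSup (h '' {x : S | InvNatLe x s}) = h s) ∧
    -- and it is the unique such homomorphism
    (∀ g : Set S → Q,
      (∀ T : Set (Set S), (∀ U ∈ T, InvDwClosed U) → g (⋃₀ T) = ⨆ U ∈ T, g U) →
      (∀ U V : Set S, InvDwClosed U → InvDwClosed V → g (U * V) = m (g U) (g V)) →
      g {f : S | f * f = f} = e →
      (∀ U : Set S, InvDwClosed U → g (inv '' U) = st (g U)) →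
      (∀ s : S, g {x : S | InvNatLe x s} = h s) →
      ∀ U : Set S, InvDwClosed U → g U = sSup (h '' U)) := by
  -- monotonicity of multiplication and involution
  have hmonoL : ∀ (a : Q) {b b' : Q}, b ≤ b' → m a b ≤ m a b' := by
    intro a b b' hb
    have h1 : sSup {b, b'} = b' := by rw [sSup_pair, sup_eq_right.mpr hb]
    have h2 := hdistl a {b, b'}
    rw [h1] at h2
    rw [h2]
    exact le_sSup ⟨b, by simp, rfl⟩
  have hmonoR : ∀ (b : Q) {a a' : Q}, a ≤ a' → m a b ≤ m a' b := by
    intro b a a' ha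
    have h1 : sSup {a, a'} = a' := by rw [sSup_pair, sup_eq_right.mpr ha]
    have h2 := hdistr b {a, a'}
    rw [h1] at h2
    rw [h2]
    exact le_sSup ⟨a, by simp, rfl⟩
  have hstmono : ∀ {a b : Q}, a ≤ b → st a ≤ st b := by
    intro a b hab
    have h1 : sSup {a, b} = b := by rw [sSup_pair, sup_eq_right.mpr hab]
    have h2 := hstsup {a, b}
    rw [h1] at h2
    rw [h2]
    exact le_sSup ⟨a, by simp, rfl⟩
  have hste : st e = e := by
    have h2 := hstm e (st e)
    rw [hel] at h2
    rw [hstst] at h2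
    rw [hel] at h2
    exact h2.symm
  -- a local monoid structure on Q
  letI : One Q := ⟨e⟩
  letI : Mul Q := ⟨m⟩
  letI : Monoid Q := { mul_assoc := hassoc, one_mul := hel, mul_one := her }
  have herM : ∀ a : Q, a * e = a := her
  have helM : ∀ a : Q, e * a = a := hel
  have hmulM : ∀ s t : S, h (s * t) = h s * h t := hmul
  have hpu1 : ∀ s : S, h s * st (h s) ≤ e := fun s => (hpu s).1
  have hpu2 : ∀ s : S, st (h s) * h s ≤ e := fun s => (hpu s).2
  -- partial-unit key identity
  have hpukey : ∀ a : Q, st a * a ≤ e → a * (st a * a) = a := by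
    intro a ha
    refine le_antisymm ?_ ?_
    · calc a * (st a * a) ≤ a * e := hmonoL a ha
        _ = a := herM a
    · calc a ≤ m (sp a) a := hsp3 a
        _ ≤ m (m a (st a)) a := hmonoR a (hsp2 a)
        _ = a * (st a * a) := hassoc a (st a) a
  -- elements below the unit
  have hsub_le_st : ∀ b : Q, b ≤ e → b ≤ st b := by
    intro b hb
    calc b ≤ m (sp b) b := hsp3 b
      _ ≤ m (m b (st b)) b := hmonoR b (hsp2 b)
      _ = b * (st b * b) := hassoc b (st b) b
      _ ≤ e * (st b * b) := hmonoR _ hb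
      _ = st b * b := helM _
      _ ≤ st b * e := hmonoL _ hb
      _ = st b := herM _
  have hsub_st : ∀ b : Q, b ≤ e → st b = b := by
    intro b hb
    have h1 : st b ≤ e := le_of_le_of_eq (hstmono hb) hste
    have h2 := hsub_le_st (st b) h1
    rw [hstst] at h2
    exact le_antisymm h2 (hsub_le_st b hb)
  have hsub_idem : ∀ b : Q, b ≤ e → b * b = b := by
    intro b hb
    refine le_antisymm ?_ ?_
    · calc b * b ≤ b * e := hmonoL b hb
        _ = b := herM b
    · calc b ≤ m (sp b) b := hsp3 b
        _ ≤ m (m b (st b)) b := hmonoR b (hsp2 b)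
        _ = b * (st b * b) := hassoc b (st b) b
        _ = b * (b * b) := by rw [hsub_st b hb]
        _ ≤ b * (b * e) := hmonoL b (hmonoL b hb)
        _ = b * b := by rw [herM]
  have hsub_comm : ∀ b c : Q, b ≤ e → c ≤ e → b * c = b ⊓ c := by
    intro b c hb hc
    refine le_antisymm (le_inf ?_ ?_) ?_
    · calc b * c ≤ b * e := hmonoL b hc
        _ = b := herM b
    · calc b * c ≤ e * c := hmonoR c hb
        _ = c := helM c
    · calc b ⊓ c = (b ⊓ c) * (b ⊓ c) := (hsub_idem _ (le_trans inf_le_left hb)).symm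
        _ ≤ b * (b ⊓ c) := hmonoR _ inf_le_left
        _ ≤ b * c := hmonoL b inf_le_right
  have hsub_comm' : ∀ b c : Q, b ≤ e → c ≤ e → b * c = c * b := by
    intro b c hb hc
    rw [hsub_comm b c hb hc, hsub_comm c b hc hb, inf_comm]
  -- an idempotent partial unit lies below the unit
  have hidem_le : ∀ a : Q, a * a = a → a * st a ≤ e → st a * a ≤ e → a ≤ e := by
    intro a haa h1 h2
    have hA' : st a * (a * st a) = st a := by
      have h0 := hpukey (st a) (by rw [hstst]; exact h1)
      rwa [hstst] at h0
    have hkey : (st a * a) * (a * st a) = st a := by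
      calc (st a * a) * (a * st a) = st a * ((a * a) * st a) := by simp only [mul_assoc]
        _ = st a * (a * st a) := by rw [haa]
        _ = st a := hA'
    have hsa : st a ≤ e := by
      calc st a = (st a * a) * (a * st a) := hkey.symm
        _ ≤ e * (a * st a) := hmonoR _ h2
        _ = a * st a := helM _
        _ ≤ e := h1
    calc a = st (st a) := (hstst a).symm
      _ ≤ st e := hstmono hsa
      _ = e := hste
  have hhidem_le : ∀ f : S, f * f = f → h f ≤ e := by
    intro f hf
    have haa : h f * h f = h f := by rw [← hmulM, hf]
    exact hidem_le (h f) haa (hpu1 f) (hpu2 f)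
  -- uniqueness of inverses among partial units
  have hinvQ : ∀ a b : Q, a * st a ≤ e → st a * a ≤ e → a * b ≤ e → b * a ≤ e →
      a * (b * a) = a → b * (a * b) = b → b = st a := by
    intro a b hq hp hr ht hab hba
    have hA : a * (st a * a) = a := hpukey a hp
    have hA' : st a * (a * st a) = st a := by
      have h0 := hpukey (st a) (by rw [hstst]; exact hq)
      rwa [hstst] at h0
    have htbr : (b * a) * (b * (a * b)) = b := by
      calc (b * a) * (b * (a * b)) = b * (a * (b * (a * b))) := by simp only [mul_assoc]
        _ = b := by rw [hba, hba]
    have e1 : (st a * a) * (b * (a * st a)) = st a := by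
      calc (st a * a) * (b * (a * st a)) = st a * ((a * (b * a)) * st a) := by
            simp only [mul_assoc]
        _ = st a * (a * st a) := by rw [hab]
        _ = st a := hA'
    have e3 : (b * a) * (st a * (a * b)) = b := by
      calc (b * a) * (st a * (a * b)) = b * ((a * (st a * a)) * b) := by simp only [mul_assoc]
        _ = b * (a * b) := by rw [hA]
        _ = b := hba
    have c1 : (b * a) * (((st a * a) * (b * (a * st a))) * (a * b)) = b := by
      rw [e1]; exact e3
    have c2 : (b * a) * (((st a * a) * (b * (a * st a))) * (a * b)) = st a := by
      calc (b * a) * (((st a * a) * (b * (a * st a))) * (a * b))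
          = ((b * a) * (st a * a)) * (b * ((a * st a) * (a * b))) := by simp only [mul_assoc]
        _ = ((st a * a) * (b * a)) * (b * ((a * b) * (a * st a))) := by
            rw [hsub_comm' (b * a) (st a * a) ht hp, hsub_comm' (a * st a) (a * b) hq hr]
        _ = (st a * a) * (((b * a) * (b * (a * b))) * (a * st a)) := by simp only [mul_assoc]
        _ = (st a * a) * (b * (a * st a)) := by rw [htbr]
        _ = st a := e1
    exact c1.symm.trans c2
  -- st ∘ h = h ∘ inv
  have hstHs : ∀ s : S, st (h s) = h (inv s) := by
    intro s
    have hi1 : (s * inv s) * (s * inv s) = s * inv s := by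
      calc (s * inv s) * (s * inv s) = (s * inv s * s) * inv s := by simp only [mul_assoc]
        _ = s * inv s := by rw [hinv1]
    have hi2 : (inv s * s) * (inv s * s) = inv s * s := by
      calc (inv s * s) * (inv s * s) = (inv s * s * inv s) * s := by simp only [mul_assoc]
        _ = inv s * s := by rw [hinv2]
    refine (hinvQ (h s) (h (inv s)) (hpu1 s) (hpu2 s) ?_ ?_ ?_ ?_).symm
    · rw [← hmulM]; exact hhidem_le _ hi1
    · rw [← hmulM]; exact hhidem_le _ hi2
    · rw [← hmulM, ← hmulM, ← mul_assoc, hinv1]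
    · rw [← hmulM, ← hmulM, ← mul_assoc, hinv2]
  -- products of idempotents in S are idempotent
  have hSidem : ∀ p q : S, p * p = p → q * q = q → (p * q) * (p * q) = p * q := by
    intro p q hp hq
    set y := inv (p * q) with hy
    have hq' : ∀ x : S, x * q * q = x * q := fun x => by rw [mul_assoc, hq]
    have hp' : ∀ x : S, x * p * p = x * p := fun x => by rw [mul_assoc, hp]
    have h1 := hinv1 (p * q)
    have h2 := hinv2 (p * q)
    rw [← hy] at h1 h2
    have hA : (p * q) * (q * y * p) * (p * q) = p * q := by
      calc (p * q) * (q * y * p) * (p * q) = p * q * q * y * p * p * q := by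
            simp only [mul_assoc]
        _ = p * q * y * p * q := by rw [hq' p, hp' (p * q * y)]
        _ = p * q := by rw [mul_assoc (p * q * y) p q]; exact h1
    have hB : (q * y * p) * (p * q) * (q * y * p) = q * y * p := by
      calc (q * y * p) * (p * q) * (q * y * p) = q * y * p * p * q * q * y * p := by
            simp only [mul_assoc]
        _ = q * y * p * q * y * p := by rw [hp' (q * y), hq' (q * y * p)]
        _ = q * (y * (p * q) * y) * p := by simp only [mul_assoc]
        _ = q * y * p := by rw [h2]
    have hy1 : q * y * p = y := by rw [hinvuniq (p * q) (q * y * p) hA hB, ← hy]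
    have hyy : y * y = y := by
      calc y * y = (q * y * p) * (q * y * p) := by rw [hy1]
        _ = q * (y * (p * q) * y) * p := by simp only [mul_assoc]
        _ = q * y * p := by rw [h2]
        _ = y := hy1
    have hyi : y = inv y := hinvuniq y y (by rw [hyy, hyy]) (by rw [hyy, hyy])
    have hpq : p * q = y := by
      rw [hinvuniq y (p * q) h2 h1, ← hyi]
    rw [hpq, hyy]
  -- the natural order is reflexive and transitive
  have hrefl : ∀ x : S, InvNatLe x x := fun x => ⟨1, one_mul 1, (one_mul x).symm⟩
  have htrans : ∀ x y z : S, InvNatLe x y → InvNatLe y z → InvNatLe x z := by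
    rintro x y z ⟨f, hf, rfl⟩ ⟨k, hk, rfl⟩
    exact ⟨f * k, hSidem f k hf hk, (mul_assoc f k z).symm⟩
  -- the six statements
  have part1 : ∀ T : Set (Set S), sSup (h '' ⋃₀ T) = ⨆ U ∈ T, sSup (h '' U) := by
    intro T
    apply le_antisymm
    · apply sSup_le
      rintro q ⟨x, ⟨U, hUT, hxU⟩, rfl⟩
      exact le_trans (le_sSup (Set.mem_image_of_mem h hxU))
        (le_iSup₂ (f := fun (U : Set S) (_ : U ∈ T) => sSup (h '' U)) U hUT)
    · apply iSup₂_le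
      intro U hUT
      apply sSup_le
      rintro q ⟨x, hx, rfl⟩
      exact le_sSup ⟨x, ⟨U, hUT, hx⟩, rfl⟩
  have part2 : ∀ U V : Set S,
      sSup (h '' (U * V)) = m (sSup (h '' U)) (sSup (h '' V)) := by
    intro U V
    apply le_antisymm
    · apply sSup_le
      rintro q ⟨x, hx, rfl⟩
      obtain ⟨u, hu, v, hv, rfl⟩ := Set.mem_mul.mp hx
      rw [hmul]
      exact le_trans (hmonoL _ (le_sSup (Set.mem_image_of_mem h hv))) (hmonoR _ (le_sSup (Set.mem_image_of_mem h hu)))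
    · rw [hdistr]
      apply sSup_le
      rintro x ⟨y, ⟨u, hu, rfl⟩, rfl⟩
      dsimp only
      rw [hdistl]
      apply sSup_le
      rintro x ⟨z, ⟨v, hv, rfl⟩, rfl⟩
      dsimp only
      rw [← hmul]
      exact le_sSup ⟨u * v, Set.mul_mem_mul hu hv, rfl⟩
  have part3 : sSup (h '' {f : S | f * f = f}) = e := by
    apply le_antisymm
    · apply sSup_le
      rintro q ⟨f, hf, rfl⟩
      exact hhidem_le f hf
    · exact le_sSup ⟨1, one_mul 1, hone⟩
  have part4 : ∀ U : Set S, sSup (h '' (inv '' U)) = st (sSup (h '' U)) := by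
    intro U
    rw [hstsup, Set.image_image, Set.image_image]
    exact congrArg sSup (Set.image_congr fun s _ => (hstHs s).symm)
  have part5 : ∀ s : S, sSup (h '' {x : S | InvNatLe x s}) = h s := by
    intro s
    apply le_antisymm
    · apply sSup_le
      rintro q ⟨x, hx, rfl⟩
      obtain ⟨f, hf, rfl⟩ := hx
      rw [hmul]
      exact le_trans (hmonoR _ (hhidem_le f hf)) (le_of_eq (hel _))
    · exact le_sSup ⟨s, hrefl s, rfl⟩
  refine ⟨fun T _ => part1 T, fun U V _ _ => part2 U V, part3, fun U _ => part4 U, part5, ?_⟩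
  intro g hg1 _hg2 _hg3 _hg4 hg5 U hU
  have hdw : ∀ s : S, InvDwClosed {x : S | InvNatLe x s} := fun s x y hxy hy =>
    htrans x y s hxy hy
  have hUnion : ⋃₀ ((fun s => {x : S | InvNatLe x s}) '' U) = U := by
    ext x
    constructor
    · rintro ⟨V, ⟨s, hs, rfl⟩, hx⟩
      exact hU x s hx hs
    · intro hx
      exact ⟨_, ⟨x, hx, rfl⟩, hrefl x⟩
  have h1 := hg1 ((fun s => {x : S | InvNatLe x s}) '' U) (by rintro V ⟨s, _, rfl⟩; exact hdw s)
  rw [hUnion] at h1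
  rw [h1, iSup_image, sSup_image]
  exact iSup_congr fun s => iSup_congr fun _ => hg5 s
end

section
/- Every abstract complete pseudogroup S is meet-complete: every nonempty subset X of S has an infimum with respect to the natural order. -/
/-- `z` is the join (least upper bound) of `X` with respect to the relation `le`. -/
def IsJoinRel {S : Type*} (le : S → S → Prop) (X : Set S) (z : S) : Prop :=
  (∀ x ∈ X, le x z) ∧ ∀ w : S, (∀ x ∈ X, le x w) → le z w

/-- Two elements of an inverse semigroup are compatible if `s t⁻¹` and `s⁻¹ t` are
idempotent. -/
def InvCompatible {S : Type*} [Mul S] (inv : S → S) (s t : S) : Prop :=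
  (s * inv t) * (s * inv t) = s * inv t ∧ (inv s * t) * (inv s * t) = inv s * t


section helpers
variable {S : Type*} [Semigroup S] (inv : S → S)
  (hinv1 : ∀ x : S, x * inv x * x = x)
  (hinv2 : ∀ x : S, inv x * x * inv x = inv x)
  (hinvuniq : ∀ x y : S, x * y * x = x → y * x * y = y → y = inv x)

private lemma mulext_13 {a b c : S} (h : a * b = c) : ∀ x : S, a * (b * x) = c * x :=
  fun x => by rw [← mul_assoc, h]

include hinvuniq in
private lemma invinv_13 (hinv1 : ∀ x : S, x * inv x * x = x)
    (hinv2 : ∀ x : S, inv x * x * inv x = inv x) : ∀ x, inv (inv x) = x :=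
  fun x => (hinvuniq (inv x) x (hinv2 x) (hinv1 x)).symm

include hinvuniq in
private lemma idem_inv_13 {e : S} (he : e * e = e) : inv e = e :=
  (hinvuniq e e (by rw [he, he]) (by rw [he, he])).symm

include hinv1 hinv2 hinvuniq in
private lemma mul_idem_13 {e f : S} (he : e * e = e) (hf : f * f = f) :
    (e * f) * (e * f) = e * f := by
  set y := inv (e * f) with hy
  have h1 : ∀ x, e * (f * (y * (e * (f * x)))) = e * (f * x) := by
    intro x
    have := congrArg (· * x) (hinv1 (e * f))
    simpa [mul_assoc] using this
  have h2 : ∀ x, y * (e * (f * (y * x))) = y * x := by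
    intro x
    have := congrArg (· * x) (hinv2 (e * f))
    simpa [mul_assoc] using this
  have he' := mulext_13 he
  have hf' := mulext_13 hf
  have hA : (e * f) * (f * (y * e)) * (e * f) = e * f := by
    simp only [mul_assoc, hf', he']
    simpa [mul_assoc] using hinv1 (e * f)
  have hB : (f * (y * e)) * (e * f) * (f * (y * e)) = f * (y * e) := by
    simp only [mul_assoc, hf', he', h2]
  have hy2 : f * (y * e) = y := hinvuniq _ _ hA hB
  have hyid : y * y = y := by
    conv_lhs => rw [← hy2]
    simp only [mul_assoc, h2]
    exact hy2
  have : inv y = y := idem_inv_13 inv hinvuniq hyid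
  have hef : e * f = y := by
    rw [← invinv_13 inv hinvuniq hinv1 hinv2 (e*f), ← hy, this]
  rw [hef]; exact hyid

include hinv1 hinv2 hinvuniq in
private lemma idem_comm_13 {e f : S} (he : e * e = e) (hf : f * f = f) :
    e * f = f * e := by
  have hef := mul_idem_13 inv hinv1 hinv2 hinvuniq he hf
  have hfe := mul_idem_13 inv hinv1 hinv2 hinvuniq hf he
  have hA : (e * f) * (f * e) * (e * f) = e * f := by
    simp only [mul_assoc, mulext_13 hf, mulext_13 he]
    simpa [mul_assoc] using hef
  have hB : (f * e) * (e * f) * (f * e) = f * e := by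
    simp only [mul_assoc, mulext_13 hf, mulext_13 he]
    simpa [mul_assoc] using hfe
  have h1 : f * e = inv (e * f) := hinvuniq _ _ hA hB
  rw [h1, idem_inv_13 inv hinvuniq hef]

include hinv1 hinv2 hinvuniq in
private lemma inv_mul_13 (a b : S) : inv (a * b) = inv b * inv a := by
  have hp : (b * inv b) * (b * inv b) = b * inv b := by
    have := congrArg (· * inv b) (hinv1 b); simpa [mul_assoc] using this
  have hq : (inv a * a) * (inv a * a) = inv a * a := by
    have := congrArg (· * a) (hinv2 a); simpa [mul_assoc] using this
  have hcomm := idem_comm_13 inv hinv1 hinv2 hinvuniq hp hq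
  have hA : (a * b) * (inv b * inv a) * (a * b) = a * b := by
    have key : ∀ x : S, b * (inv b * (inv a * (a * x))) = inv a * (a * (b * (inv b * x))) := by
      intro x
      have := congrArg (· * x) hcomm
      simpa [mul_assoc] using this
    simp only [mul_assoc, key]
    rw [show b * (inv b * b) = b by simpa [mul_assoc] using hinv1 b]
    rw [← mul_assoc, ← mul_assoc, hinv1 a]
  have hB : (inv b * inv a) * (a * b) * (inv b * inv a) = inv b * inv a := by
    have key : ∀ x : S, inv a * (a * (b * (inv b * x))) = b * (inv b * (inv a * (a * x))) := by
      intro x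
      have := congrArg (· * x) hcomm.symm
      simpa [mul_assoc] using this
    simp only [mul_assoc, key]
    rw [show inv a * (a * inv a) = inv a by simpa [mul_assoc] using hinv2 a]
    rw [← mul_assoc, ← mul_assoc, hinv2 b]
  exact (hinvuniq _ _ hA hB).symm

include hinv1 hinv2 hinvuniq in
private lemma compat_13 {s t x : S} (hs : InvNatLe s x) (ht : InvNatLe t x) :
    InvCompatible inv s t := by
  obtain ⟨e, he, hse⟩ := hs
  obtain ⟨f, hf, htf⟩ := ht
  have hh : (x * inv x) * (x * inv x) = x * inv x := by
    have := congrArg (· * inv x) (hinv1 x); simpa [mul_assoc] using this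
  constructor
  · -- s * inv t idempotent
    have h1 : s * inv t = e * ((x * inv x) * f) := by
      rw [hse, htf, inv_mul_13 inv hinv1 hinv2 hinvuniq,
        idem_inv_13 inv hinvuniq hf]
      simp [mul_assoc]
    rw [h1]
    exact mul_idem_13 inv hinv1 hinv2 hinvuniq he
      (mul_idem_13 inv hinv1 hinv2 hinvuniq hh hf)
  · -- inv s * t idempotent
    have hg : (e * f) * (e * f) = e * f := mul_idem_13 inv hinv1 hinv2 hinvuniq he hf
    have h1 : inv s * t = inv x * ((e * f) * x) := by
      rw [hse, htf, inv_mul_13 inv hinv1 hinv2 hinvuniq,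
        idem_inv_13 inv hinvuniq he]
      simp [mul_assoc]
    rw [h1]
    have hcomm := idem_comm_13 inv hinv1 hinv2 hinvuniq hh hg
    have key : ∀ y : S, x * (inv x * (e * (f * y))) = e * (f * (x * (inv x * y))) := by
      intro y
      have := congrArg (· * y) hcomm
      simpa [mul_assoc] using this
    simp only [mul_assoc, key]
    rw [show x * (inv x * x) = x by simpa [mul_assoc] using hinv1 x]
    have key2 : ∀ y : S, e * (f * (e * (f * y))) = e * (f * y) := by
      intro y
      have := congrArg (· * y) hg
      simpa [mul_assoc] using this
    simp only [key2]

end helpers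

/-- every abstract complete pseudogroup is meet-complete: every nonempty
subset has an infimum in the natural order (Proposition `prop:abspg`-2). -/
theorem stmt_13 {S : Type*} [Semigroup S] (inv : S → S)
    (hinv1 : ∀ x : S, x * inv x * x = x)
    (hinv2 : ∀ x : S, inv x * x * inv x = inv x)
    (hinvuniq : ∀ x y : S, x * y * x = x → y * x * y = y → y = inv x)
    -- completeness: every compatible subset has a join
    (hcomplete : ∀ X : Set S, (∀ s ∈ X, ∀ t ∈ X, InvCompatible inv s t) →
      ∃ z : S, IsJoinRel InvNatLe X z)
    -- infinite distributivity
    (hdist : ∀ (s : S) (X : Set S) (z : S), IsJoinRel InvNatLe X z →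
      IsJoinRel InvNatLe ((fun x => s * x) '' X) (s * z) ∧
      IsJoinRel InvNatLe ((fun x => x * s) '' X) (z * s)) :
    ∀ X : Set S, X.Nonempty →
      ∃ z : S, (∀ x ∈ X, InvNatLe z x) ∧
        ∀ w : S, (∀ x ∈ X, InvNatLe w x) → InvNatLe w z := by
  intro X hX
  obtain ⟨x0, hx0⟩ := hX
  set L : Set S := {w | ∀ x ∈ X, InvNatLe w x} with hL
  have hLcomp : ∀ s ∈ L, ∀ t ∈ L, InvCompatible inv s t := fun s hs t ht =>
    compat_13 inv hinv1 hinv2 hinvuniq (hs x0 hx0) (ht x0 hx0)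
  obtain ⟨z, hz1, hz2⟩ := hcomplete L hLcomp
  exact ⟨z, fun x hx => hz2 x (fun w hw => hw x hx), fun w hw => hz1 w hw⟩
end

section
/- Let S and T be abstract complete pseudogroups and let h : S → T be a monoid homomorphism. The following are equivalent: (1) h preserves the joins of all compatible subsets of S; (2) the restriction of h to E(S) preserves all joins of subsets of E(S); (3) h preserves all joins that exist in S, i.e. whenever ⨆X exists in S then ⨆ h(X) exists in T and h(⨆X) = ⨆ h(X). -/
section Aux
variable {S : Type*} [Monoid S]

lemma aux_idem_inv (invS : S → S)
    (hinvuniq : ∀ x y : S, x * y * x = x → y * x * y = y → y = invS x) {e : S} (he : e * e = e) : invS e = e :=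
  (hinvuniq e e (by rw [he, he]) (by rw [he, he])).symm

lemma aux_idem_mul (invS : S → S)
    (hinv1 : ∀ x : S, x * invS x * x = x)
    (hinv2 : ∀ x : S, invS x * x * invS x = invS x)
    (hinvuniq : ∀ x y : S, x * y * x = x → y * x * y = y → y = invS x)
    {e f : S} (he : e * e = e) (hf : f * f = f) :
    (e * f) * (e * f) = e * f := by
  obtain ⟨x, hx⟩ : ∃ x, x = e * f := ⟨_, rfl⟩
  obtain ⟨y, hy⟩ : ∃ y, y = invS x := ⟨_, rfl⟩
  suffices hxx : x * x = x by rw [← hx]; exact hxx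
  have p1 : x * (f * y * e) * x = x := by
    have e1 : x * (f * y * e) * x = x * y * x := by
      rw [hx]
      simp only [mul_assoc]
      rw [← mul_assoc f f, hf, ← mul_assoc e e, he]
    rw [e1, hy, hinv1]
  have p2 : (f * y * e) * x * (f * y * e) = f * y * e := by
    have e1 : f * y * e * x * (f * y * e) = f * (y * x * y) * e := by
      rw [hx]
      simp only [mul_assoc]
      rw [← mul_assoc e e, he, ← mul_assoc f f, hf]
    rw [e1, hy, hinv2]
  have key : f * y * e = y := (hinvuniq x (f * y * e) p1 p2).trans hy.symm
  have e2 : y * x * y = y := by rw [hy]; exact hinv2 x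
  have hyy : y * y = y := by
    have e1 : (f * y * e) * (f * y * e) = f * (y * x * y) * e := by
      rw [hx]; simp only [mul_assoc]
    have e3 : y * y = (f * y * e) * (f * y * e) := by rw [key]
    rw [e3, e1, e2, key]
  have hxy : x = y := by
    have h1 : x = invS y := hinvuniq y x e2 (by rw [hy]; exact hinv1 x)
    rw [h1, aux_idem_inv invS hinvuniq hyy]
  rw [hxy, hyy]

lemma aux_idem_comm (invS : S → S)
    (hinv1 : ∀ x : S, x * invS x * x = x)
    (hinv2 : ∀ x : S, invS x * x * invS x = invS x)
    (hinvuniq : ∀ x y : S, x * y * x = x → y * x * y = y → y = invS x)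
    {e f : S} (he : e * e = e) (hf : f * f = f) :
    e * f = f * e := by
  have hef := aux_idem_mul invS hinv1 hinv2 hinvuniq he hf
  have hfe := aux_idem_mul invS hinv1 hinv2 hinvuniq hf he
  have h1 : f * e = invS (e * f) := by
    apply hinvuniq
    · calc e * f * (f * e) * (e * f) = e * (f * f) * ((e * e) * f) := by
            simp only [mul_assoc]
      _ = (e * f) * (e * f) := by rw [hf, he]
      _ = e * f := hef
    · calc f * e * (e * f) * (f * e) = f * (e * e) * ((f * f) * e) := by
            simp only [mul_assoc]
      _ = (f * e) * (f * e) := by rw [hf, he]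
      _ = f * e := hfe
  rw [h1, aux_idem_inv invS hinvuniq hef]

lemma aux_zz_idem (invS : S → S)
    (hinv2 : ∀ x : S, invS x * x * invS x = invS x) (z : S) : (z * invS z) * (z * invS z) = z * invS z := by
  calc z * invS z * (z * invS z) = z * (invS z * z * invS z) := by
        simp only [mul_assoc]
  _ = z * invS z := by rw [hinv2]

/-- If x ≤ z then x * z⁻¹ is idempotent and (x * z⁻¹) * z = x. -/
lemma aux_le_decomp (invS : S → S)
    (hinv1 : ∀ x : S, x * invS x * x = x)
    (hinv2 : ∀ x : S, invS x * x * invS x = invS x)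
    (hinvuniq : ∀ x y : S, x * y * x = x → y * x * y = y → y = invS x)
    {x z : S} (hle : InvNatLe x z) :
    ((x * invS z) * (x * invS z) = x * invS z) ∧ (x * invS z) * z = x := by
  obtain ⟨f, hf, hxf⟩ := hle
  have hzz := aux_zz_idem invS hinv2 z
  constructor
  · have : x * invS z = f * (z * invS z) := by rw [hxf]; simp only [mul_assoc]
    rw [this]
    exact aux_idem_mul invS hinv1 hinv2 hinvuniq hf hzz
  · calc x * invS z * z = f * (z * invS z * z) := by rw [hxf]; simp only [mul_assoc]
    _ = f * z := by rw [hinv1]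
    _ = x := hxf.symm

end Aux

/-- for a monoid homomorphism `h` between abstract complete pseudogroups,
the following are equivalent: (1) `h` preserves joins of compatible subsets; (2) the
restriction of `h` to the idempotents preserves all joins of sets of idempotents;
(3) `h` preserves all existing joins (Proposition `prop:abspg`-3). -/
theorem stmt_14 {S : Type*} [Monoid S] (invS : S → S)
    (hinv1 : ∀ x : S, x * invS x * x = x)
    (hinv2 : ∀ x : S, invS x * x * invS x = invS x)
    (hinvuniq : ∀ x y : S, x * y * x = x → y * x * y = y → y = invS x)
    (hcomplete : ∀ X : Set S, (∀ s ∈ X, ∀ t ∈ X, InvCompatible invS s t) →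
      ∃ z : S, IsJoinRel InvNatLe X z)
    (hdist : ∀ (s : S) (X : Set S) (z : S), IsJoinRel InvNatLe X z →
      IsJoinRel InvNatLe ((fun x => s * x) '' X) (s * z) ∧
      IsJoinRel InvNatLe ((fun x => x * s) '' X) (z * s))
    {T : Type*} [Monoid T] (invT : T → T)
    (hinv1' : ∀ x : T, x * invT x * x = x)
    (hinv2' : ∀ x : T, invT x * x * invT x = invT x)
    (hinvuniq' : ∀ x y : T, x * y * x = x → y * x * y = y → y = invT x)
    (hcomplete' : ∀ X : Set T, (∀ s ∈ X, ∀ t ∈ X, InvCompatible invT s t) →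
      ∃ z : T, IsJoinRel InvNatLe X z)
    (hdist' : ∀ (s : T) (X : Set T) (z : T), IsJoinRel InvNatLe X z →
      IsJoinRel InvNatLe ((fun x => s * x) '' X) (s * z) ∧
      IsJoinRel InvNatLe ((fun x => x * s) '' X) (z * s))
    (h : S → T) (hone : h 1 = 1) (hmul : ∀ x y : S, h (x * y) = h x * h y) :
    List.TFAE [
      -- (1) h preserves joins of compatible subsets
      ∀ (X : Set S) (z : S), (∀ s ∈ X, ∀ t ∈ X, InvCompatible invS s t) →
        IsJoinRel InvNatLe X z → IsJoinRel InvNatLe (h '' X) (h z),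
      -- (2) the restriction of h to E(S) preserves all joins of sets of idempotents
      ∀ (X : Set S) (z : S), (∀ x ∈ X, x * x = x) →
        IsJoinRel InvNatLe X z → IsJoinRel InvNatLe (h '' X) (h z),
      -- (3) h preserves all joins that exist in S
      ∀ (X : Set S) (z : S),
        IsJoinRel InvNatLe X z → IsJoinRel InvNatLe (h '' X) (h z)
    ] := by
  tfae_have 3 → 1 := by
    intro h3 X z _ hz
    exact h3 X z hz
  tfae_have 1 → 2 := by
    intro h1 X z hXid hz
    apply h1 X z _ hz
    intro s hs t ht
    have hs' := hXid s hs
    have ht' := hXid t ht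
    have hit : invS t = t := aux_idem_inv invS hinvuniq ht'
    have his : invS s = s := aux_idem_inv invS hinvuniq hs'
    constructor
    · rw [hit]; exact aux_idem_mul invS hinv1 hinv2 hinvuniq hs' ht'
    · rw [his]; exact aux_idem_mul invS hinv1 hinv2 hinvuniq hs' ht'
  tfae_have 2 → 3 := by
    intro h2 X z hz
    -- X' := image of X under (· * invS z), all idempotent, with join z * invS z
    set X' := (fun x => x * invS z) '' X with hX'
    have hjoinX' : IsJoinRel InvNatLe X' (z * invS z) := (hdist (invS z) X z hz).2
    have hX'id : ∀ x ∈ X', x * x = x := by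
      rintro _ ⟨x, hx, rfl⟩
      exact (aux_le_decomp invS hinv1 hinv2 hinvuniq (hz.1 x hx)).1
    have hT1 : IsJoinRel InvNatLe (h '' X') (h (z * invS z)) :=
      h2 X' (z * invS z) hX'id hjoinX'
    have hT2 := (hdist' (h z) (h '' X') (h (z * invS z)) hT1).2
    have himg : (fun x => x * h z) '' (h '' X') = h '' X := by
      rw [hX', Set.image_image, Set.image_image]
      apply Set.image_congr
      intro x hx
      rw [← hmul]
      congr 1
      exact (aux_le_decomp invS hinv1 hinv2 hinvuniq (hz.1 x hx)).2
    have hval : h (z * invS z) * h z = h z := by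
      rw [← hmul, hinv1]
    rw [himg, hval] at hT2
    exact hT2
  tfae_finish
end

section
/- Let S be an abstract complete pseudogroup, and for each downwards closed subset U of S define j(U) = { ⨆X : X ⊆ U, X compatible }. Then: (i) j(U) is the least compatibly closed ideal of S containing U; (ii) j(U) ∩ j(V) ⊆ j(U ∩ V) for all downwards closed U, V; (iii) j(U) j(V) ⊆ j(U V) for all downwards closed U, V, where the products are pointwise; (iv) j commutes with pointwise inversion: j({u⁻¹ : u ∈ U}) = { v⁻¹ : v ∈ j(U) }. -/
open scoped Pointwise

/-- A compatibly closed ideal: a downwards closed set containing the join of each of its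
compatible subsets. -/
def InvCCIdeal {S : Type*} [Mul S] (inv : S → S) (I : Set S) : Prop :=
  InvDwClosed I ∧
  ∀ X : Set S, X ⊆ I → (∀ s ∈ X, ∀ t ∈ X, InvCompatible inv s t) →
    ∀ z : S, IsJoinRel InvNatLe X z → z ∈ I

/-- The closure `j(U) = { ⨆X : X ⊆ U, X compatible }`. -/
def ccClosure {S : Type*} [Mul S] (inv : S → S) (U : Set S) : Set S :=
  {z : S | ∃ X : Set S, X ⊆ U ∧ (∀ s ∈ X, ∀ t ∈ X, InvCompatible inv s t) ∧
    IsJoinRel InvNatLe X z}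

namespace Stmt15Aux

variable {S : Type*} [Semigroup S] {inv : S → S}

section
variable (h1 : ∀ x : S, x * inv x * x = x)
    (h2 : ∀ x : S, inv x * x * inv x = inv x)
    (hu : ∀ x y : S, x * y * x = x → y * x * y = y → y = inv x)

lemma idem_shift {e : S} (he : e * e = e) (y : S) : e * (e * y) = e * y := by
  rw [← mul_assoc, he]

include h1 in
lemma idem_right (x : S) : (x * inv x) * (x * inv x) = x * inv x := by
  rw [show (x*inv x)*(x*inv x) = (x*inv x*x)*inv x by simp only [mul_assoc], h1 x]

include h2 in
lemma idem_left (x : S) : (inv x * x) * (inv x * x) = inv x * x := by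
  rw [show (inv x*x)*(inv x*x) = (inv x*x*inv x)*x by simp only [mul_assoc], h2 x]

include h1 h2 hu

lemma inv_invol (x : S) : inv (inv x) = x := (hu (inv x) x (h2 x) (h1 x)).symm

lemma inv_of_idem {e : S} (he : e * e = e) : inv e = e :=
  (hu e e (by rw [he, he]) (by rw [he, he])).symm

lemma mul_idem {e f : S} (he : e * e = e) (hf : f * f = f) :
    (e * f) * (e * f) = e * f := by
  set a := inv (e * f) with ha
  have hA' : e*(f*(a*(e*f))) = e*f := by simpa only [mul_assoc] using h1 (e*f)
  have hB' : a*(e*(f*a)) = a := by simpa only [mul_assoc] using h2 (e*f)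
  have key : a*(e*(f*(a*e))) = a*e := by
    rw [show a*(e*(f*(a*e))) = (a*(e*(f*a)))*e by simp only [mul_assoc], hB']
  have hfae : f * a * e = a := by
    refine (hu (e*f) (f*a*e) ?_ ?_).trans ha.symm
    · simp only [mul_assoc]
      rw [idem_shift hf, idem_shift he]
      exact hA'
    · simp only [mul_assoc]
      rw [idem_shift he, idem_shift hf, key]
  have haa : a * a = a := by
    rw [← hfae]
    simp only [mul_assoc]
    rw [key]
  have hef : e * f = a := by
    rw [← inv_invol h1 h2 hu (e*f), ← ha, inv_of_idem h1 h2 hu haa]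
  rw [hef]; exact haa

lemma idem_comm {e f : S} (he : e * e = e) (hf : f * f = f) : e * f = f * e := by
  have hef := mul_idem h1 h2 hu he hf
  have hfe := mul_idem h1 h2 hu hf he
  have key : f * e = inv (e * f) := by
    refine hu (e*f) (f*e) ?_ ?_
    · simp only [mul_assoc]
      rw [idem_shift hf, idem_shift he]
      simpa only [mul_assoc] using hef
    · simp only [mul_assoc]
      rw [idem_shift he, idem_shift hf]
      simpa only [mul_assoc] using hfe
  rw [key, inv_of_idem h1 h2 hu hef]

lemma inv_mul_rev (a b : S) : inv (a * b) = inv b * inv a := by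
  refine (hu (a*b) (inv b * inv a) ?_ ?_).symm
  · calc (a*b)*(inv b*inv a)*(a*b)
        = a*(((b*inv b)*(inv a*a))*b) := by simp only [mul_assoc]
      _ = a*(((inv a*a)*(b*inv b))*b) := by
          rw [idem_comm h1 h2 hu (idem_right h1 b) (idem_left h2 a)]
      _ = (a*inv a*a)*(b*inv b*b) := by simp only [mul_assoc]
      _ = a*b := by rw [h1 a, h1 b]
  · calc (inv b*inv a)*(a*b)*(inv b*inv a)
        = inv b*(((inv a*a)*(b*inv b))*inv a) := by simp only [mul_assoc]
      _ = inv b*(((b*inv b)*(inv a*a))*inv a) := by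
          rw [idem_comm h1 h2 hu (idem_left h2 a) (idem_right h1 b)]
      _ = (inv b*b*inv b)*(inv a*a*inv a) := by simp only [mul_assoc]
      _ = inv b*inv a := by rw [h2 a, h2 b]

lemma conj_idem {e : S} (he : e * e = e) (z : S) :
    (z*(e*inv z))*(z*(e*inv z)) = z*(e*inv z) := by
  calc (z*(e*inv z))*(z*(e*inv z))
      = z*((e*(inv z*z))*(e*inv z)) := by simp only [mul_assoc]
    _ = z*(((inv z*z)*e)*(e*inv z)) := by
        rw [idem_comm h1 h2 hu he (idem_left h2 z)]
    _ = z*(inv z*(z*(e*(e*inv z)))) := by simp only [mul_assoc]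
    _ = z*(inv z*(z*(e*inv z))) := by rw [idem_shift he]
    _ = (z*inv z*z)*(e*inv z) := by simp only [mul_assoc]
    _ = z*(e*inv z) := by rw [h1 z]

lemma conj_idem' {e : S} (he : e * e = e) (z : S) :
    (inv z*(e*z))*(inv z*(e*z)) = inv z*(e*z) := by
  have := conj_idem h1 h2 hu he (inv z)
  rwa [inv_invol h1 h2 hu z] at this

lemma le_refl (x : S) : InvNatLe x x := ⟨x*inv x, idem_right h1 x, (h1 x).symm⟩

lemma le_trans {x y z : S} (hxy : InvNatLe x y) (hyz : InvNatLe y z) : InvNatLe x z := by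
  obtain ⟨e, he, hx⟩ := hxy
  obtain ⟨f, hf, hy⟩ := hyz
  exact ⟨e*f, mul_idem h1 h2 hu he hf, by rw [mul_assoc, ← hy, ← hx]⟩

lemma le_char {x y : S} (hxy : InvNatLe x y) : x = x * inv x * y := by
  obtain ⟨e, he, hx⟩ := hxy
  have hxin : x * inv x = e*(y*inv y) := by
    rw [hx, inv_mul_rev h1 h2 hu, inv_of_idem h1 h2 hu he]
    calc (e*y)*(inv y*e) = e*((y*inv y)*e) := by simp only [mul_assoc]
      _ = e*(e*(y*inv y)) := by rw [idem_comm h1 h2 hu (idem_right h1 y) he]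
      _ = e*(y*inv y) := idem_shift he _
  calc x = e*y := hx
    _ = e*(y*inv y*y) := by rw [h1 y]
    _ = (e*(y*inv y))*y := by simp only [mul_assoc]
    _ = x*inv x*y := by rw [hxin]

lemma le_right {x y : S} (hxy : InvNatLe x y) : ∃ f : S, f*f = f ∧ x = y*f := by
  obtain ⟨e, he, hx⟩ := hxy
  refine ⟨inv y*(e*y), conj_idem' h1 h2 hu he y, ?_⟩
  calc x = e*y := hx
    _ = e*(y*inv y*y) := by rw [h1 y]
    _ = (e*(y*inv y))*y := by simp only [mul_assoc]
    _ = ((y*inv y)*e)*y := by rw [idem_comm h1 h2 hu he (idem_right h1 y)]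
    _ = y*(inv y*(e*y)) := by simp only [mul_assoc]

lemma le_of_right {x y f : S} (hf : f*f = f) (hx : x = y*f) : InvNatLe x y := by
  refine ⟨y*(f*inv y), conj_idem h1 h2 hu hf y, ?_⟩
  calc x = y*f := hx
    _ = (y*inv y*y)*f := by rw [h1 y]
    _ = y*((inv y*y)*f) := by simp only [mul_assoc]
    _ = y*(f*(inv y*y)) := by rw [idem_comm h1 h2 hu (idem_left h2 y) hf]
    _ = (y*(f*inv y))*y := by simp only [mul_assoc]

lemma mul_le_mul {x a y b : S} (hxa : InvNatLe x a) (hyb : InvNatLe y b) :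
    InvNatLe (x*y) (a*b) := by
  obtain ⟨e, he, hx⟩ := hxa
  obtain ⟨f, hf, hy⟩ := hyb
  refine ⟨e*(a*(f*inv a)), mul_idem h1 h2 hu he (conj_idem h1 h2 hu hf a), ?_⟩
  have key : (e*(a*(f*inv a)))*(a*b) = x*y := by
    calc (e*(a*(f*inv a)))*(a*b)
        = e*(a*((f*(inv a*a))*b)) := by simp only [mul_assoc]
      _ = e*(a*(((inv a*a)*f)*b)) := by
          rw [idem_comm h1 h2 hu hf (idem_left h2 a)]
      _ = e*((a*inv a*a)*(f*b)) := by simp only [mul_assoc]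
      _ = e*(a*(f*b)) := by rw [h1 a]
      _ = (e*a)*(f*b) := by simp only [mul_assoc]
      _ = x*y := by rw [hx, hy]
  exact key.symm

lemma inv_le {x y : S} (hxy : InvNatLe x y) : InvNatLe (inv x) (inv y) := by
  obtain ⟨e, he, hx⟩ := hxy
  refine ⟨inv y*(e*y), conj_idem' h1 h2 hu he y, ?_⟩
  calc inv x = inv (e*y) := by rw [hx]
    _ = inv y*e := by rw [inv_mul_rev h1 h2 hu, inv_of_idem h1 h2 hu he]
    _ = (inv y*y*inv y)*e := by rw [h2 y]
    _ = inv y*((y*inv y)*e) := by simp only [mul_assoc]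
    _ = inv y*(e*(y*inv y)) := by rw [idem_comm h1 h2 hu (idem_right h1 y) he]
    _ = (inv y*(e*y))*inv y := by simp only [mul_assoc]

lemma compat_refl (s : S) : InvCompatible inv s s := ⟨idem_right h1 s, idem_left h2 s⟩

lemma compat_symm {s t : S} (h : InvCompatible inv s t) : InvCompatible inv t s := by
  obtain ⟨hst, hst'⟩ := h
  have e1 : t * inv s = s * inv t := by
    have a1 : inv (s * inv t) = t * inv s := by
      rw [inv_mul_rev h1 h2 hu, inv_invol h1 h2 hu]
    rw [← a1, inv_of_idem h1 h2 hu hst]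
  have e2 : inv t * s = inv s * t := by
    have a2 : inv (inv s * t) = inv t * s := by
      rw [inv_mul_rev h1 h2 hu, inv_invol h1 h2 hu]
    rw [← a2, inv_of_idem h1 h2 hu hst']
  exact ⟨by rw [e1]; exact hst, by rw [e2]; exact hst'⟩

lemma compat_inv {s t : S} (h : InvCompatible inv s t) :
    InvCompatible inv (inv s) (inv t) := by
  constructor
  · rw [inv_invol h1 h2 hu t]; exact h.2
  · rw [inv_invol h1 h2 hu s]; exact h.1

lemma compat_of_le {s t z : S} (hs : InvNatLe s z) (ht : InvNatLe t z) :
    InvCompatible inv s t := by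
  obtain ⟨e, he, hse⟩ := hs
  obtain ⟨f, hf, htf⟩ := ht
  constructor
  · have key : s * inv t = e*((z*inv z)*f) := by
      rw [hse, htf, inv_mul_rev h1 h2 hu, inv_of_idem h1 h2 hu hf]
      simp only [mul_assoc]
    rw [key]
    exact mul_idem h1 h2 hu he (mul_idem h1 h2 hu (idem_right h1 z) hf)
  · have key : inv s * t = inv z*((e*f)*z) := by
      rw [hse, htf, inv_mul_rev h1 h2 hu, inv_of_idem h1 h2 hu he]
      simp only [mul_assoc]
    rw [key]
    exact conj_idem' h1 h2 hu (mul_idem h1 h2 hu he hf) z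

lemma compat_mono
    (hcomplete : ∀ X : Set S, (∀ s ∈ X, ∀ t ∈ X, InvCompatible inv s t) →
      ∃ z : S, IsJoinRel InvNatLe X z)
    {s' s t' t : S} (hs : InvNatLe s' s) (ht : InvNatLe t' t)
    (h : InvCompatible inv s t) : InvCompatible inv s' t' := by
  have hpc : ∀ a ∈ ({s, t} : Set S), ∀ b ∈ ({s, t} : Set S), InvCompatible inv a b := by
    rintro a ha b hb
    simp only [Set.mem_insert_iff, Set.mem_singleton_iff] at ha hb
    rcases ha with rfl | rfl <;> rcases hb with rfl | rfl
    · exact compat_refl h1 h2 hu _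
    · exact h
    · exact compat_symm h1 h2 hu h
    · exact compat_refl h1 h2 hu _
  obtain ⟨z, hz⟩ := hcomplete {s, t} hpc
  exact compat_of_le h1 h2 hu
    (le_trans h1 h2 hu hs (hz.1 s (Set.mem_insert _ _)))
    (le_trans h1 h2 hu ht (hz.1 t (Set.mem_insert_iff.2 (Or.inr rfl))))

lemma join_inv {X : Set S} {z : S} (h : IsJoinRel InvNatLe X z) :
    IsJoinRel InvNatLe (inv '' X) (inv z) := by
  constructor
  · rintro _ ⟨x, hx, rfl⟩
    exact inv_le h1 h2 hu (h.1 x hx)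
  · intro w hw
    have hz : InvNatLe z (inv w) := by
      refine h.2 (inv w) fun x hx => ?_
      have := inv_le h1 h2 hu (hw (inv x) ⟨x, hx, rfl⟩)
      rwa [inv_invol h1 h2 hu] at this
    have := inv_le h1 h2 hu hz
    rwa [inv_invol h1 h2 hu] at this

end
end Stmt15Aux


/-- for an abstract complete pseudogroup, `j(U)` is the least compatibly
closed ideal containing a downwards closed set `U`, and `j` is a nucleus for meets,
pointwise products and pointwise inversion. -/
theorem stmt_15 {S : Type*} [Semigroup S] (inv : S → S)
    (hinv1 : ∀ x : S, x * inv x * x = x)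
    (hinv2 : ∀ x : S, inv x * x * inv x = inv x)
    (hinvuniq : ∀ x y : S, x * y * x = x → y * x * y = y → y = inv x)
    (hcomplete : ∀ X : Set S, (∀ s ∈ X, ∀ t ∈ X, InvCompatible inv s t) →
      ∃ z : S, IsJoinRel InvNatLe X z)
    (hdist : ∀ (s : S) (X : Set S) (z : S), IsJoinRel InvNatLe X z →
      IsJoinRel InvNatLe ((fun x => s * x) '' X) (s * z) ∧
      IsJoinRel InvNatLe ((fun x => x * s) '' X) (z * s)) :
    -- (i) j(U) is the least compatibly closed ideal containing U
    (∀ U : Set S, InvDwClosed U →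
      U ⊆ ccClosure inv U ∧ InvCCIdeal inv (ccClosure inv U) ∧
      ∀ I : Set S, InvCCIdeal inv I → U ⊆ I → ccClosure inv U ⊆ I) ∧
    -- (ii) j(U) ∩ j(V) ⊆ j(U ∩ V)
    (∀ U V : Set S, InvDwClosed U → InvDwClosed V →
      ccClosure inv U ∩ ccClosure inv V ⊆ ccClosure inv (U ∩ V)) ∧
    -- (iii) j(U) j(V) ⊆ j(U V)
    (∀ U V : Set S, InvDwClosed U → InvDwClosed V →
      ccClosure inv U * ccClosure inv V ⊆ ccClosure inv (U * V)) ∧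
    -- (iv) j commutes with pointwise inversion
    (∀ U : Set S, InvDwClosed U →
      ccClosure inv (inv '' U) = inv '' ccClosure inv U) := by
    classical
  have lerefl := Stmt15Aux.le_refl hinv1 hinv2 hinvuniq (inv := inv)
  have letrans := fun {x y z : S} => Stmt15Aux.le_trans hinv1 hinv2 hinvuniq (x := x) (y := y) (z := z)
  have lechar := fun {x y : S} => Stmt15Aux.le_char hinv1 hinv2 hinvuniq (x := x) (y := y)
  have idemr := Stmt15Aux.idem_right hinv1 (inv := inv)
  have idemcomm := fun {e f : S} => Stmt15Aux.idem_comm hinv1 hinv2 hinvuniq (e := e) (f := f)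
  have cmono := fun {s' s t' t : S} =>
    Stmt15Aux.compat_mono hinv1 hinv2 hinvuniq hcomplete (s' := s') (s := s) (t' := t') (t := t)
  have cofle := fun {s t z : S} => Stmt15Aux.compat_of_le hinv1 hinv2 hinvuniq (s := s) (t := t) (z := z)
  refine ⟨?_, ?_, ?_, ?_⟩
  · -- (i)
    intro U hU
    refine ⟨?_, ⟨?_, ?_⟩, ?_⟩
    · -- U ⊆ j(U)
      intro u huU
      refine ⟨{u}, by simpa using huU, ?_, ?_, ?_⟩
      · intro s hs t ht
        rw [Set.mem_singleton_iff] at hs ht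
        subst hs; subst ht
        exact Stmt15Aux.compat_refl hinv1 hinv2 hinvuniq _
      · intro x hx
        rw [Set.mem_singleton_iff] at hx
        subst hx; exact lerefl x
      · exact fun w hw => hw u rfl
    · -- j(U) downwards closed
      intro x y hxy hy
      obtain ⟨X, hXU, hXc, hXj⟩ := hy
      obtain ⟨f, hf, hx⟩ := hxy
      refine ⟨(fun t => f * t) '' X, ?_, ?_, ?_⟩
      · rintro _ ⟨t, ht, rfl⟩
        exact hU (f * t) t ⟨f, hf, rfl⟩ (hXU ht)
      · rintro _ ⟨s, hs, rfl⟩ _ ⟨t, ht, rfl⟩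
        exact cmono ⟨f, hf, rfl⟩ ⟨f, hf, rfl⟩ (hXc s hs t ht)
      · have := (hdist f X y hXj).1
        rwa [← hx] at this
    · -- j(U) closed under compatible joins
      intro X hXsub hXcomp z hz
      choose F hF1 hF2 hF3 using fun (a : S) (ha : a ∈ X) => hXsub ha
      refine ⟨{y | ∃ a : S, ∃ ha : a ∈ X, y ∈ F a ha}, ?_, ?_, ?_, ?_⟩
      · rintro y ⟨a, ha, hy⟩
        exact hF1 a ha hy
      · rintro s ⟨a, ha, hs⟩ t ⟨b, hb, ht⟩
        exact cmono ((hF3 a ha).1 s hs) ((hF3 b hb).1 t ht) (hXcomp a ha b hb)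
      · rintro y ⟨a, ha, hy⟩
        exact letrans ((hF3 a ha).1 y hy) (hz.1 a ha)
      · intro w hw
        refine hz.2 w fun a ha => ?_
        exact (hF3 a ha).2 w fun y hy => hw y ⟨a, ha, hy⟩
    · -- least
      rintro I ⟨hIdw, hIcc⟩ hUI z ⟨X, hXU, hXc, hXj⟩
      exact hIcc X (hXU.trans hUI) hXc z hXj
  · -- (ii)
    rintro U V hU hV z ⟨⟨X, hXU, hXc, hXj⟩, ⟨Y, hYV, hYc, hYj⟩⟩
    have hmem : ∀ w, (∃ x ∈ X, ∃ y ∈ Y, w = x * inv x * y) → InvNatLe w z := by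
      rintro w ⟨x, hx, y, hy, rfl⟩
      exact letrans ⟨x * inv x, idemr x, rfl⟩ (hYj.1 y hy)
    refine ⟨{w | ∃ x ∈ X, ∃ y ∈ Y, w = x * inv x * y}, ?_, ?_, ?_, ?_⟩
    · rintro w ⟨x, hx, y, hy, rfl⟩
      have hxz : x = x * inv x * z := lechar (hXj.1 x hx)
      have hyz : y = y * inv y * z := lechar (hYj.1 y hy)
      constructor
      · -- in U : w ≤ x
        have key : x * inv x * y = (y * inv y) * x := by
          conv_lhs => rw [hyz]
          conv_rhs => rw [hxz]
          calc x*inv x*(y*inv y*z) = ((x*inv x)*(y*inv y))*z := by simp only [mul_assoc]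
            _ = ((y*inv y)*(x*inv x))*z := by rw [idemcomm (idemr x) (idemr y)]
            _ = (y*inv y)*(x*inv x*z) := by simp only [mul_assoc]
        exact hU _ x ⟨y * inv y, idemr y, key⟩ (hXU hx)
      · exact hV _ y ⟨x * inv x, idemr x, rfl⟩ (hYV hy)
    · rintro s hs t ht
      exact cofle (hmem s hs) (hmem t ht)
    · exact fun w hw => hmem w hw
    · intro w hw
      refine hXj.2 w fun x hx => ?_
      have hd := (hdist (x * inv x) Y z hYj).1
      have hle : InvNatLe (x * inv x * z) w := by
        refine hd.2 w ?_
        rintro _ ⟨y, hy, rfl⟩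
        exact hw _ ⟨x, hx, y, hy, rfl⟩
      have hxz : x = x * inv x * z := lechar (hXj.1 x hx)
      rw [hxz]; exact hle
  · -- (iii)
    intro U V hU hV w hw
    rw [Set.mem_mul] at hw
    obtain ⟨a, ha, b, hb, rfl⟩ := hw
    obtain ⟨X, hXU, hXc, hXj⟩ := ha
    obtain ⟨Y, hYV, hYc, hYj⟩ := hb
    have hmem : ∀ p, (∃ x ∈ X, ∃ y ∈ Y, p = x * y) → InvNatLe p (a * b) := by
      rintro p ⟨x, hx, y, hy, rfl⟩
      exact Stmt15Aux.mul_le_mul hinv1 hinv2 hinvuniq (hXj.1 x hx) (hYj.1 y hy)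
    refine ⟨{p | ∃ x ∈ X, ∃ y ∈ Y, p = x * y}, ?_, ?_, ?_, ?_⟩
    · rintro p ⟨x, hx, y, hy, rfl⟩
      exact Set.mul_mem_mul (hXU hx) (hYV hy)
    · rintro s hs t ht
      exact cofle (hmem s hs) (hmem t ht)
    · exact fun p hp => hmem p hp
    · intro w0 hw0
      refine (hdist b X a hXj).2.2 w0 ?_
      rintro _ ⟨x, hx, rfl⟩
      refine (hdist x Y b hYj).1.2 w0 ?_
      rintro _ ⟨y, hy, rfl⟩
      exact hw0 _ ⟨x, hx, y, hy, rfl⟩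
  · -- (iv)
    intro U hU
    ext w
    constructor
    · rintro ⟨X, hXsub, hXc, hXj⟩
      refine ⟨inv w, ⟨inv '' X, ?_, ?_, ?_⟩, Stmt15Aux.inv_invol hinv1 hinv2 hinvuniq w⟩
      · rintro _ ⟨x, hx, rfl⟩
        obtain ⟨u, huU, rfl⟩ := hXsub hx
        rw [Stmt15Aux.inv_invol hinv1 hinv2 hinvuniq u]
        exact huU
      · rintro _ ⟨x, hx, rfl⟩ _ ⟨y, hy, rfl⟩
        exact Stmt15Aux.compat_inv hinv1 hinv2 hinvuniq (hXc x hx y hy)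
      · exact Stmt15Aux.join_inv hinv1 hinv2 hinvuniq hXj
    · rintro ⟨v, ⟨X, hXsub, hXc, hXj⟩, rfl⟩
      refine ⟨inv '' X, ?_, ?_, ?_⟩
      · rintro _ ⟨x, hx, rfl⟩
        exact ⟨x, hXsub hx, rfl⟩
      · rintro _ ⟨x, hx, rfl⟩ _ ⟨y, hy, rfl⟩
        exact Stmt15Aux.compat_inv hinv1 hinv2 hinvuniq (hXc x hx y hy)
      · exact Stmt15Aux.join_inv hinv1 hinv2 hinvuniq hXj
end

section
/- Let Q be a stably supported quantale whose underlying complete lattice is a frame (a stable quantal frame), with unit e and top element 1. Then for all a ∈ Q: (a ∧ e) 1 ≥ ⨆{ x ∧ y : x, y ∈ Q, x y* ≤ a } and 1 (a ∧ e) ≥ ⨆{ x ∧ y : x, y ∈ Q, x* y ≤ a }. -/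
/-- in a stable quantal frame, `(a ∧ e) 1 ≥ ⨆{x ∧ y : x y* ≤ a}` and
`1 (a ∧ e) ≥ ⨆{x ∧ y : x* y ≤ a}`. -/
theorem stmt_16 {Q : Type*} [Order.Frame Q]
    (m : Q → Q → Q) (e : Q) (st : Q → Q) (sp : Q → Q)
    (hassoc : ∀ a b c : Q, m (m a b) c = m a (m b c))
    (hdistl : ∀ (a : Q) (T : Set Q), m a (sSup T) = sSup ((fun b => m a b) '' T))
    (hdistr : ∀ (b : Q) (T : Set Q), m (sSup T) b = sSup ((fun a => m a b) '' T))
    (hel : ∀ a : Q, m e a = a) (her : ∀ a : Q, m a e = a)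
    (hstsup : ∀ T : Set Q, st (sSup T) = sSup (st '' T))
    (hstst : ∀ a : Q, st (st a) = a)
    (hstm : ∀ a b : Q, st (m a b) = m (st b) (st a))
    (hspsup : ∀ T : Set Q, sp (sSup T) = sSup (sp '' T))
    (hsp1 : ∀ a : Q, sp a ≤ e)
    (hsp2 : ∀ a : Q, sp a ≤ m a (st a))
    (hsp3 : ∀ a : Q, a ≤ m (sp a) a)
    (hstable : ∀ a b : Q, sp (m a b) ≤ sp a) :
    ∀ a : Q,
      sSup {z : Q | ∃ x y : Q, m x (st y) ≤ a ∧ z = x ⊓ y} ≤ m (a ⊓ e) ⊤ ∧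
      sSup {z : Q | ∃ x y : Q, m (st x) y ≤ a ∧ z = x ⊓ y} ≤ m ⊤ (a ⊓ e) := by

  -- monotonicity lemmas
  have mmonol : ∀ a b c : Q, b ≤ c → m a b ≤ m a c := by
    intro a b c h
    have h1 : sSup {b, c} = c := by
      rw [sSup_pair, sup_eq_right.mpr h]
    have h2 := hdistl a {b, c}
    rw [h1, Set.image_pair, sSup_pair] at h2
    rw [h2]; exact le_sup_left
  have mmonor : ∀ a b c : Q, b ≤ c → m b a ≤ m c a := by
    intro a b c h
    have h1 : sSup {b, c} = c := by
      rw [sSup_pair, sup_eq_right.mpr h]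
    have h2 := hdistr a {b, c}
    rw [h1, Set.image_pair, sSup_pair] at h2
    rw [h2]; exact le_sup_left
  have stmono : ∀ b c : Q, b ≤ c → st b ≤ st c := by
    intro b c h
    have h1 : sSup {b, c} = c := by
      rw [sSup_pair, sup_eq_right.mpr h]
    have h2 := hstsup {b, c}
    rw [h1, Set.image_pair, sSup_pair] at h2
    rw [h2]; exact le_sup_left
  have spmono : ∀ b c : Q, b ≤ c → sp b ≤ sp c := by
    intro b c h
    have h1 : sSup {b, c} = c := by
      rw [sSup_pair, sup_eq_right.mpr h]
    have h2 := hspsup {b, c}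
    rw [h1, Set.image_pair, sSup_pair] at h2
    rw [h2]; exact le_sup_left
  -- st e = e
  have hste : st e = e := by
    have h1 : m (st e) e = e := by
      have h2 := hstm (st e) e
      rw [her, hstst] at h2
      exact h2.symm
    rw [her] at h1
    exact h1
  -- sp is idempotent
  have hspidem : ∀ a : Q, sp (sp a) = sp a := by
    intro a
    refine le_antisymm ?_ ?_
    · calc sp (sp a) ≤ m (sp a) (st (sp a)) := hsp2 (sp a)
        _ ≤ m (sp a) e := mmonol _ _ _ (by
            have := stmono _ _ (hsp1 a); rwa [hste] at this)
        _ = sp a := her _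
    · calc sp a ≤ sp (m (sp a) a) := spmono _ _ (hsp3 a)
        _ ≤ sp (sp a) := hstable _ _
  -- sp is self-adjoint
  have hspst : ∀ a : Q, st (sp a) = sp a := by
    have key : ∀ a : Q, sp a ≤ st (sp a) := by
      intro a
      calc sp a = sp (sp a) := (hspidem a).symm
        _ ≤ m (sp a) (st (sp a)) := hsp2 (sp a)
        _ ≤ m e (st (sp a)) := mmonor _ _ _ (hsp1 a)
        _ = st (sp a) := hel _
    intro a
    refine le_antisymm ?_ (key a)
    have := stmono _ _ (key a)
    rwa [hstst] at this
  intro a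
  constructor
  · refine sSup_le ?_
    rintro z ⟨x, y, hxy, rfl⟩
    have hsa : sp (x ⊓ y) ≤ a := by
      calc sp (x ⊓ y) ≤ m (x ⊓ y) (st (x ⊓ y)) := hsp2 _
        _ ≤ m x (st (x ⊓ y)) := mmonor _ _ _ inf_le_left
        _ ≤ m x (st y) := mmonol _ _ _ (stmono _ _ inf_le_right)
        _ ≤ a := hxy
    calc x ⊓ y ≤ m (sp (x ⊓ y)) (x ⊓ y) := hsp3 _
      _ ≤ m (a ⊓ e) (x ⊓ y) := mmonor _ _ _ (le_inf hsa (hsp1 _))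
      _ ≤ m (a ⊓ e) ⊤ := mmonol _ _ _ le_top
  · refine sSup_le ?_
    rintro z ⟨x, y, hxy, rfl⟩
    have hsa : sp (st (x ⊓ y)) ≤ a := by
      calc sp (st (x ⊓ y)) ≤ m (st (x ⊓ y)) (st (st (x ⊓ y))) := hsp2 _
        _ = m (st (x ⊓ y)) (x ⊓ y) := by rw [hstst]
        _ ≤ m (st x) (x ⊓ y) := mmonor _ _ _ (stmono _ _ inf_le_left)
        _ ≤ m (st x) y := mmonol _ _ _ inf_le_right
        _ ≤ a := hxy
    have h1 : st (x ⊓ y) ≤ m (sp (st (x ⊓ y))) (st (x ⊓ y)) := hsp3 _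
    have h2 := stmono _ _ h1
    rw [hstst, hstm, hstst, hspst] at h2
    calc x ⊓ y ≤ m (x ⊓ y) (sp (st (x ⊓ y))) := h2
      _ ≤ m ⊤ (sp (st (x ⊓ y))) := mmonor _ _ _ le_top
      _ ≤ m ⊤ (a ⊓ e) := mmonol _ _ _ (le_inf hsa (hsp1 _))
end

section
/- Let Q be a unital involutive quantale whose underlying complete lattice is a frame, with unit e and top element 1. Then Q satisfies, for all a ∈ Q, the two conditions (a ∧ e) 1 ≤ ⨆{ x ∧ y : x, y ∈ Q, x y* ≤ a } and 1 (a ∧ e) ≤ ⨆{ x ∧ y : x, y ∈ Q, x* y ≤ a }, if and only if ⨆ Π(Q) = 1, i.e. the top element is the join of the partial units of Q. -/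
/-- a unital involutive quantal frame satisfies the two lax inversion laws
`(a ∧ e) 1 ≤ ⨆{x ∧ y : x y* ≤ a}` and `1 (a ∧ e) ≤ ⨆{x ∧ y : x* y ≤ a}` if and only if
its top is the join of its partial units (Lemma `inversionlemma`). -/
theorem stmt_17 {Q : Type*} [Order.Frame Q]
    (m : Q → Q → Q) (e : Q) (st : Q → Q)
    (hassoc : ∀ a b c : Q, m (m a b) c = m a (m b c))
    (hdistl : ∀ (a : Q) (T : Set Q), m a (sSup T) = sSup ((fun b => m a b) '' T))
    (hdistr : ∀ (b : Q) (T : Set Q), m (sSup T) b = sSup ((fun a => m a b) '' T))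
    (hel : ∀ a : Q, m e a = a) (her : ∀ a : Q, m a e = a)
    (hstsup : ∀ T : Set Q, st (sSup T) = sSup (st '' T))
    (hstst : ∀ a : Q, st (st a) = a)
    (hstm : ∀ a b : Q, st (m a b) = m (st b) (st a)) :
    ((∀ a : Q,
        m (a ⊓ e) ⊤ ≤ sSup {z : Q | ∃ x y : Q, m x (st y) ≤ a ∧ z = x ⊓ y} ∧
        m ⊤ (a ⊓ e) ≤ sSup {z : Q | ∃ x y : Q, m (st x) y ≤ a ∧ z = x ⊓ y}) ↔
      sSup {x : Q | IsPartialUnit m e st x} = ⊤) := by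
  -- binary distributivity
  have hdl2 : ∀ a b c : Q, m a (b ⊔ c) = m a b ⊔ m a c := by
    intro a b c
    rw [← sSup_pair, hdistl, Set.image_pair, sSup_pair]
  have hdr2 : ∀ a b c : Q, m (b ⊔ c) a = m b a ⊔ m c a := by
    intro a b c
    rw [← sSup_pair, hdistr, Set.image_pair, sSup_pair]
  have hst2 : ∀ b c : Q, st (b ⊔ c) = st b ⊔ st c := by
    intro b c
    rw [← sSup_pair, hstsup, Set.image_pair, sSup_pair]
  -- monotonicity
  have hml : ∀ {a b : Q} (c : Q), a ≤ b → m a c ≤ m b c := by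
    intro a b c h
    have : m (a ⊔ b) c = m a c ⊔ m b c := hdr2 c a b
    rw [sup_eq_right.mpr h] at this
    exact le_sup_left.trans this.ge
  have hmr : ∀ {a b : Q} (c : Q), a ≤ b → m c a ≤ m c b := by
    intro a b c h
    have : m c (a ⊔ b) = m c a ⊔ m c b := hdl2 c a b
    rw [sup_eq_right.mpr h] at this
    exact le_sup_left.trans this.ge
  have hstmono : ∀ {a b : Q}, a ≤ b → st a ≤ st b := by
    intro a b h
    have : st (a ⊔ b) = st a ⊔ st b := hst2 a b
    rw [sup_eq_right.mpr h] at this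
    exact le_sup_left.trans this.ge
  -- st e = e
  have hste : st e = e := by
    have h1 : ∀ b : Q, m b (st e) = b := by
      intro b
      conv_lhs => rw [← hstst b]
      rw [← hstm, hel, hstst]
    have := h1 e
    rw [hel] at this
    exact this
  constructor
  · -- inversion laws → sSup partial units = ⊤
    intro h
    obtain ⟨h1, h2⟩ := h e
    rw [inf_idem] at h1 h2
    rw [hel] at h1
    have h2' : (⊤ : Q) ≤ sSup {z : Q | ∃ x y : Q, m (st x) y ≤ e ∧ z = x ⊓ y} := by
      calc (⊤ : Q) = m ⊤ e := (her ⊤).symm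
        _ ≤ _ := h2
    refine top_le_iff.mp ?_
    have : (⊤ : Q) ≤ sSup {z : Q | ∃ x y : Q, m x (st y) ≤ e ∧ z = x ⊓ y}
        ⊓ sSup {z : Q | ∃ x y : Q, m (st x) y ≤ e ∧ z = x ⊓ y} := le_inf h1 h2'
    refine this.trans ?_
    rw [sSup_inf_sSup]
    refine iSup_le fun p => iSup_le fun hp => ?_
    obtain ⟨⟨x, y, hxy, hp1⟩, ⟨u, v, huv, hp2⟩⟩ := hp
    apply le_sSup
    rw [hp1, hp2]
    constructor
    · -- m w (st w) ≤ e
      calc m (x ⊓ y ⊓ (u ⊓ v)) (st (x ⊓ y ⊓ (u ⊓ v)))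
          ≤ m x (st y) := by
            apply le_trans (hml _ (inf_le_left.trans inf_le_left))
            exact hmr _ (hstmono (inf_le_left.trans inf_le_right))
        _ ≤ e := hxy
    · calc m (st (x ⊓ y ⊓ (u ⊓ v))) (x ⊓ y ⊓ (u ⊓ v))
          ≤ m (st u) v := by
            apply le_trans (hml _ (hstmono (inf_le_right.trans inf_le_left)))
            exact hmr _ (inf_le_right.trans inf_le_right)
        _ ≤ e := huv
  · -- sSup partial units = ⊤ → inversion laws
    intro h a
    constructor
    · rw [← h, hdistl]
      refine sSup_le ?_
      rintro z ⟨u, hu, rfl⟩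
      apply le_sSup
      refine ⟨m (a ⊓ e) u, u, ?_, ?_⟩
      · calc m (m (a ⊓ e) u) (st u) = m (a ⊓ e) (m u (st u)) := hassoc _ _ _
          _ ≤ m (a ⊓ e) e := hmr _ hu.1
          _ = a ⊓ e := her _
          _ ≤ a := inf_le_left
      · refine (le_inf le_rfl ?_).antisymm inf_le_left
        calc m (a ⊓ e) u ≤ m e u := hml _ inf_le_right
          _ = u := hel u
    · rw [← h, hdistr]
      refine sSup_le ?_
      rintro z ⟨u, hu, rfl⟩
      apply le_sSup
      refine ⟨u, m u (a ⊓ e), ?_, ?_⟩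
      · calc m (st u) (m u (a ⊓ e)) = m (m (st u) u) (a ⊓ e) := (hassoc _ _ _).symm
          _ ≤ m e (a ⊓ e) := hml _ hu.2
          _ = a ⊓ e := hel _
          _ ≤ a := inf_le_left
      · refine (le_inf ?_ le_rfl).antisymm inf_le_right
        calc m u (a ⊓ e) ≤ m u e := hmr _ inf_le_right
          _ = u := her u
end

section
/- Let Q be an inverse quantal frame, i.e. a supported quantale whose underlying complete lattice is a frame and in which ⨆ Π(Q) = 1. Then the inverse monoid Π(Q) of partial units is an abstract complete pseudogroup, and the map ε : ℒ_c(Π(Q)) → Q defined by ε(U) = ⨆U is an isomorphism of unital involutive quantales: ε is a bijection that preserves arbitrary suprema and binary meets, satisfies ε(U V) = ε(U) ε(V) for the pointwise product U V = {u v : u ∈ U, v ∈ V}, maps the unit {a ∈ Π(Q) : a ≤ e} of ℒ_c(Π(Q)) to e, and satisfies ε({u* : u ∈ U}) = ε(U)*. -/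
/-- Compatibility of two partial units: `s t*` and `s* t` are idempotent. -/
def PUCompatible {Q : Type*} [CompleteLattice Q]
    (m : Q → Q → Q) (st : Q → Q) (a b : Q) : Prop :=
  m (m a (st b)) (m a (st b)) = m a (st b) ∧
  m (m (st a) b) (m (st a) b) = m (st a) b

/-- A downwards closed subset of the inverse monoid `Π(Q)` of partial units (whose
natural order is the order inherited from `Q`). -/
def PUDwClosed {Q : Type*} [CompleteLattice Q]
    (m : Q → Q → Q) (e : Q) (st : Q → Q) (U : Set Q) : Prop :=
  U ⊆ {a : Q | IsPartialUnit m e st a} ∧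
  ∀ a b : Q, IsPartialUnit m e st a → a ≤ b → b ∈ U → a ∈ U

/-- A compatibly closed ideal of `Π(Q)`: a downwards closed set of partial units
containing the join of each of its compatible subsets. -/
def PUCCIdeal {Q : Type*} [CompleteLattice Q]
    (m : Q → Q → Q) (e : Q) (st : Q → Q) (U : Set Q) : Prop :=
  PUDwClosed m e st U ∧
  ∀ X : Set Q, X ⊆ U → (∀ a ∈ X, ∀ b ∈ X, PUCompatible m st a b) → sSup X ∈ U

/-- for an inverse quantal frame `Q`, the partial units form an abstract
complete pseudogroup and `ε : ℒ_c(Π(Q)) → Q`, `ε U = ⨆ U`, is an isomorphism of unital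
involutive quantales (Theorem `thm:invqufr`). -/
theorem stmt_19 {Q : Type*} [Order.Frame Q]
    (m : Q → Q → Q) (e : Q) (st : Q → Q) (sp : Q → Q)
    (hassoc : ∀ a b c : Q, m (m a b) c = m a (m b c))
    (hdistl : ∀ (a : Q) (T : Set Q), m a (sSup T) = sSup ((fun b => m a b) '' T))
    (hdistr : ∀ (b : Q) (T : Set Q), m (sSup T) b = sSup ((fun a => m a b) '' T))
    (hel : ∀ a : Q, m e a = a) (her : ∀ a : Q, m a e = a)
    (hstsup : ∀ T : Set Q, st (sSup T) = sSup (st '' T))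
    (hstst : ∀ a : Q, st (st a) = a)
    (hstm : ∀ a b : Q, st (m a b) = m (st b) (st a))
    (hspsup : ∀ T : Set Q, sp (sSup T) = sSup (sp '' T))
    (hsp1 : ∀ a : Q, sp a ≤ e)
    (hsp2 : ∀ a : Q, sp a ≤ m a (st a))
    (hsp3 : ∀ a : Q, a ≤ m (sp a) a)
    (hcover : sSup {x : Q | IsPartialUnit m e st x} = ⊤) :
    -- Π(Q) is an abstract complete pseudogroup:
    -- it is closed under the unit, multiplication and involution,
    (IsPartialUnit m e st e ∧
      (∀ a b : Q, IsPartialUnit m e st a → IsPartialUnit m e st b →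
        IsPartialUnit m e st (m a b)) ∧
      (∀ a : Q, IsPartialUnit m e st a → IsPartialUnit m e st (st a))) ∧
    -- it is complete: the join (taken in Q) of a compatible set of partial units is a
    -- partial unit,
    (∀ X : Set Q, X ⊆ {a : Q | IsPartialUnit m e st a} →
      (∀ a ∈ X, ∀ b ∈ X, PUCompatible m st a b) → IsPartialUnit m e st (sSup X)) ∧
    -- and it is infinitely distributive
    (∀ (s : Q) (X : Set Q), m s (sSup X) = sSup ((fun x => m s x) '' X) ∧
      m (sSup X) s = sSup ((fun x => m x s) '' X)) ∧
    -- ε is a bijection from the compatibly closed ideals of Π(Q) onto Q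
    (∀ a : Q, ∃ U : Set Q, PUCCIdeal m e st U ∧ sSup U = a) ∧
    (∀ U V : Set Q, PUCCIdeal m e st U → PUCCIdeal m e st V →
      sSup U = sSup V → U = V) ∧
    -- ε preserves arbitrary suprema (the supremum in ℒ_c(Π(Q)) of a family T being the
    -- least compatibly closed ideal containing ⋃₀ T)
    (∀ (T : Set (Set Q)) (W : Set Q), (∀ U ∈ T, PUCCIdeal m e st U) →
      PUCCIdeal m e st W → ⋃₀ T ⊆ W →
      (∀ W' : Set Q, PUCCIdeal m e st W' → ⋃₀ T ⊆ W' → W ⊆ W') →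
      sSup W = ⨆ U ∈ T, sSup U) ∧
    -- ε preserves binary meets (intersections of compatibly closed ideals)
    (∀ U V : Set Q, PUCCIdeal m e st U → PUCCIdeal m e st V →
      PUCCIdeal m e st (U ∩ V) ∧ sSup (U ∩ V) = sSup U ⊓ sSup V) ∧
    -- ε turns the pointwise product into the quantale multiplication
    (∀ U V : Set Q, PUCCIdeal m e st U → PUCCIdeal m e st V →
      sSup (Set.image2 m U V) = m (sSup U) (sSup V)) ∧
    -- ε maps the unit of ℒ_c(Π(Q)) to e
    (PUCCIdeal m e st {a : Q | IsPartialUnit m e st a ∧ a ≤ e} ∧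
      sSup {a : Q | IsPartialUnit m e st a ∧ a ≤ e} = e) ∧
    -- ε intertwines pointwise inversion with the involution
    (∀ U : Set Q, PUCCIdeal m e st U → sSup (st '' U) = st (sSup U)) := by
  -- monotonicity of multiplication and involution
  have hmono_l : ∀ c a b : Q, a ≤ b → m c a ≤ m c b := by
    intro c a b hab
    have h := hdistl c {a, b}
    rw [sSup_pair, Set.image_pair, sSup_pair] at h
    calc m c a ≤ m c a ⊔ m c b := le_sup_left
      _ = m c (a ⊔ b) := h.symm
      _ = m c b := by rw [sup_eq_right.mpr hab]
  have hmono_r : ∀ c a b : Q, a ≤ b → m a c ≤ m b c := by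
    intro c a b hab
    have h := hdistr c {a, b}
    rw [sSup_pair, Set.image_pair, sSup_pair] at h
    calc m a c ≤ m a c ⊔ m b c := le_sup_left
      _ = m (a ⊔ b) c := h.symm
      _ = m b c := by rw [sup_eq_right.mpr hab]
  have hst_mono : ∀ a b : Q, a ≤ b → st a ≤ st b := by
    intro a b hab
    have h := hstsup {a, b}
    rw [sSup_pair, Set.image_pair, sSup_pair] at h
    calc st a ≤ st a ⊔ st b := le_sup_left
      _ = st (a ⊔ b) := h.symm
      _ = st b := by rw [sup_eq_right.mpr hab]
  -- st e = e
  have hst_unit : ∀ x : Q, m (st e) x = x := by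
    intro x
    have h : st (st x) = m (st e) (st (st x)) := by
      conv_lhs => rw [← her (st x)]
      rw [hstm]
    rw [hstst] at h
    exact h.symm
  have hst_e : st e = e := (her (st e)).symm.trans (hst_unit e)
  -- partial units are downward closed
  have hPU_dw : ∀ x y : Q, x ≤ y → IsPartialUnit m e st y →
      IsPartialUnit m e st x := by
    intro x y hxy hy
    exact ⟨((hmono_r (st x) x y hxy).trans
        (hmono_l y (st x) (st y) (hst_mono x y hxy))).trans hy.1,
      ((hmono_r x (st x) (st y) (hst_mono x y hxy)).trans
        (hmono_l (st y) x y hxy)).trans hy.2⟩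
  -- basic inequality a ≤ a a* a
  have h_aasta : ∀ a : Q, a ≤ m (m a (st a)) a :=
    fun a => (hsp3 a).trans (hmono_r a (sp a) (m a (st a)) (hsp2 a))
  -- elements below e are self-adjoint
  have hle_e_st : ∀ a : Q, a ≤ e → a ≤ st a := by
    intro a ha
    calc a ≤ m (m a (st a)) a := h_aasta a
      _ ≤ m (m a (st a)) e := hmono_l _ a e ha
      _ = m a (st a) := her _
      _ ≤ m e (st a) := hmono_r (st a) a e ha
      _ = st a := hel _
  have hst_eq : ∀ a : Q, a ≤ e → st a = a := by
    intro a ha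
    have h1 : st a ≤ e := (hst_mono a e ha).trans_eq hst_e
    exact le_antisymm ((hle_e_st (st a) h1).trans_eq (hstst a)) (hle_e_st a ha)
  -- below e, multiplication is meet
  have hmul_meet : ∀ a b : Q, a ≤ e → b ≤ e → m a b = a ⊓ b := by
    intro a b ha hb
    apply le_antisymm
    · exact le_inf ((hmono_l a b e hb).trans_eq (her a))
        ((hmono_r b a e ha).trans_eq (hel b))
    · set c := a ⊓ b with hc
      have hce : c ≤ e := inf_le_left.trans ha
      calc c ≤ m (m c (st c)) c := h_aasta c
        _ = m (m c c) c := by rw [hst_eq c hce]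
        _ ≤ m (m a b) c := hmono_r c _ _
            (le_trans (hmono_r c c a inf_le_left) (hmono_l a c b inf_le_right))
        _ ≤ m (m a b) e := hmono_l _ c e hce
        _ = m a b := her _
  -- idempotent partial units are below e
  have hidem_le : ∀ f : Q, IsPartialUnit m e st f → m f f = f → f ≤ e := by
    intro f hf hff
    have h1 : m f (st f) ≤ st f := by
      calc m f (st f) = m f (st (m f f)) := by rw [hff]
        _ = m f (m (st f) (st f)) := by rw [hstm]
        _ = m (m f (st f)) (st f) := (hassoc _ _ _).symm
        _ ≤ m e (st f) := hmono_r (st f) _ e hf.1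
        _ = st f := hel _
    calc f ≤ m (m f (st f)) f := h_aasta f
      _ ≤ m (st f) f := hmono_r f _ _ h1
      _ ≤ e := hf.2
  -- closure under multiplication and involution
  have hPU_st : ∀ a : Q, IsPartialUnit m e st a → IsPartialUnit m e st (st a) := by
    intro a ha
    constructor
    · rw [hstst]; exact ha.2
    · rw [hstst]; exact ha.1
  have hPU_mul : ∀ a b : Q, IsPartialUnit m e st a → IsPartialUnit m e st b →
      IsPartialUnit m e st (m a b) := by
    intro a b ha hb
    constructor
    · calc m (m a b) (st (m a b)) = m (m a b) (m (st b) (st a)) := by rw [hstm]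
        _ = m a (m b (m (st b) (st a))) := hassoc _ _ _
        _ = m a (m (m b (st b)) (st a)) := by rw [hassoc]
        _ ≤ m a (m e (st a)) := hmono_l a _ _ (hmono_r (st a) _ e hb.1)
        _ = m a (st a) := by rw [hel]
        _ ≤ e := ha.1
    · calc m (st (m a b)) (m a b) = m (m (st b) (st a)) (m a b) := by rw [hstm]
        _ = m (st b) (m (st a) (m a b)) := hassoc _ _ _
        _ = m (st b) (m (m (st a) a) b) := by rw [hassoc]
        _ ≤ m (st b) (m e b) := hmono_l (st b) _ _ (hmono_r b _ e ha.2)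
        _ = m (st b) b := by rw [hel]
        _ ≤ e := hb.2
  have hPU_e : IsPartialUnit m e st e := by
    constructor
    · rw [hst_e, hel]
    · rw [hst_e, hel]
  -- completeness: joins of compatible sets of partial units
  have hcomplete : ∀ X : Set Q, X ⊆ {a : Q | IsPartialUnit m e st a} →
      (∀ a ∈ X, ∀ b ∈ X, PUCompatible m st a b) → IsPartialUnit m e st (sSup X) := by
    intro X hX hc
    constructor
    · rw [hstsup, hdistl]
      apply sSup_le
      rintro _ ⟨_, ⟨t, htX, rfl⟩, rfl⟩
      show m (sSup X) (st t) ≤ e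
      rw [hdistr]
      apply sSup_le
      rintro _ ⟨s, hsX, rfl⟩
      show m s (st t) ≤ e
      exact hidem_le (m s (st t)) (hPU_mul s (st t) (hX hsX) (hPU_st t (hX htX)))
        (hc s hsX t htX).1
    · rw [hstsup, hdistr]
      apply sSup_le
      rintro _ ⟨_, ⟨t, htX, rfl⟩, rfl⟩
      show m (st t) (sSup X) ≤ e
      rw [hdistl]
      apply sSup_le
      rintro _ ⟨s, hsX, rfl⟩
      show m (st t) s ≤ e
      exact hidem_le (m (st t) s) (hPU_mul (st t) s (hPU_st t (hX htX)) (hX hsX))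
        (hc t htX s hsX).2
  -- every element is the join of the partial units below it
  have L1 : ∀ a : Q, sSup {x : Q | IsPartialUnit m e st x ∧ x ≤ a} = a := by
    intro a
    apply le_antisymm (sSup_le fun x hx => hx.2)
    calc a = a ⊓ sSup {x : Q | IsPartialUnit m e st x} := by
          rw [hcover, inf_top_eq]
      _ = ⨆ b ∈ {x : Q | IsPartialUnit m e st x}, a ⊓ b := inf_sSup_eq
      _ ≤ sSup {x : Q | IsPartialUnit m e st x ∧ x ≤ a} := by
          apply iSup₂_le
          intro b hb
          exact le_sSup ⟨hPU_dw (a ⊓ b) b inf_le_right hb, inf_le_left⟩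
  -- the principal ideals
  have hUCC : ∀ a : Q, PUCCIdeal m e st {x : Q | IsPartialUnit m e st x ∧ x ≤ a} := by
    intro a
    refine ⟨⟨fun x hx => hx.1, fun x y hxPU hxy hy => ⟨hxPU, hxy.trans hy.2⟩⟩, ?_⟩
    intro X hsub hc
    exact ⟨hcomplete X (fun x hx => (hsub hx).1) hc, sSup_le fun x hx => (hsub hx).2⟩
  -- any two elements below a common partial unit are compatible
  have hcompat_below : ∀ u x y : Q, IsPartialUnit m e st u → x ≤ u → y ≤ u →
      PUCompatible m st x y := by
    intro u x y hu hx hy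
    have h1 : m x (st y) ≤ e :=
      ((hmono_r (st y) x u hx).trans
        (hmono_l u (st y) (st u) (hst_mono y u hy))).trans hu.1
    have h2 : m (st x) y ≤ e :=
      ((hmono_r y (st x) (st u) (hst_mono x u hx)).trans
        (hmono_l (st u) y u hy)).trans hu.2
    exact ⟨(hmul_meet _ _ h1 h1).trans (inf_idem _),
      (hmul_meet _ _ h2 h2).trans (inf_idem _)⟩
  -- membership from the join: if a partial unit lies below sSup U, it lies in U
  have hmem : ∀ U : Set Q, PUCCIdeal m e st U → ∀ u : Q, IsPartialUnit m e st u →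
      u ≤ sSup U → u ∈ U := by
    intro U hU u hu hle
    set X : Set Q := (fun v => u ⊓ v) '' U with hXdef
    have hXU : X ⊆ U := by
      rintro _ ⟨v, hv, rfl⟩
      exact hU.1.2 (u ⊓ v) v (hPU_dw (u ⊓ v) u inf_le_left hu) inf_le_right hv
    have hXc : ∀ a ∈ X, ∀ b ∈ X, PUCompatible m st a b := by
      rintro _ ⟨v, hv, rfl⟩ _ ⟨w, hw, rfl⟩
      exact hcompat_below u _ _ hu inf_le_left inf_le_left
    have hsX : sSup X = u := by
      apply le_antisymm
      · apply sSup_le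
        rintro _ ⟨v, hv, rfl⟩
        exact inf_le_left
      · have h2 : u ⊓ sSup U = sSup X := by rw [inf_sSup_eq, ← sSup_image]
        exact le_of_eq ((inf_eq_left.mpr hle).symm.trans h2)
    have := hU.2 X hXU hXc
    rwa [hsX] at this
  refine ⟨⟨hPU_e, hPU_mul, hPU_st⟩, hcomplete,
    fun s X => ⟨hdistl s X, hdistr s X⟩, ?_, ?_, ?_, ?_, ?_, ?_, ?_⟩
  · -- surjectivity
    intro a
    exact ⟨{x : Q | IsPartialUnit m e st x ∧ x ≤ a}, hUCC a, L1 a⟩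
  · -- injectivity
    intro U V hU hV hsup
    apply Set.Subset.antisymm
    · intro u hu
      exact hmem V hV u (hU.1.1 hu) ((le_sSup hu).trans_eq hsup)
    · intro v hv
      exact hmem U hU v (hV.1.1 hv) ((le_sSup hv).trans_eq hsup.symm)
  · -- suprema
    intro T W hT hW hsub hleast
    have key : (⨆ U ∈ T, sSup U) = sSup (⋃₀ T) := (sSup_sUnion T).symm
    rw [key]
    apply le_antisymm
    · have hW' : W ⊆ {x : Q | IsPartialUnit m e st x ∧ x ≤ sSup (⋃₀ T)} := by
        apply hleast _ (hUCC _)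
        intro x hx
        rcases hx with ⟨U, hUT, hxU⟩
        exact ⟨(hT U hUT).1.1 hxU, le_sSup ⟨U, hUT, hxU⟩⟩
      exact sSup_le fun x hx => (hW' hx).2
    · exact sSup_le_sSup hsub
  · -- binary meets
    intro U V hU hV
    constructor
    · refine ⟨⟨fun x hx => hU.1.1 hx.1,
        fun a b ha hab hb => ⟨hU.1.2 a b ha hab hb.1, hV.1.2 a b ha hab hb.2⟩⟩, ?_⟩
      intro X hsub hc
      exact ⟨hU.2 X (fun x hx => (hsub hx).1) hc, hV.2 X (fun x hx => (hsub hx).2) hc⟩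
    · apply le_antisymm
      · exact le_inf (sSup_le_sSup Set.inter_subset_left)
          (sSup_le_sSup Set.inter_subset_right)
      · rw [sSup_inf_eq]
        apply iSup₂_le
        intro u hu
        rw [inf_sSup_eq]
        apply iSup₂_le
        intro v hv
        apply le_sSup
        have hPUuv : IsPartialUnit m e st (u ⊓ v) :=
          hPU_dw (u ⊓ v) u inf_le_left (hU.1.1 hu)
        exact ⟨hU.1.2 (u ⊓ v) u hPUuv inf_le_left hu,
          hV.1.2 (u ⊓ v) v hPUuv inf_le_right hv⟩
  · -- multiplication
    intro U V hU hV
    apply le_antisymm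
    · apply sSup_le
      rintro _ ⟨u, hu, v, hv, rfl⟩
      exact (hmono_r v u (sSup U) (le_sSup hu)).trans
        (hmono_l (sSup U) v (sSup V) (le_sSup hv))
    · rw [hdistr (sSup V) U]
      apply sSup_le
      rintro _ ⟨u, hu, rfl⟩
      show m u (sSup V) ≤ sSup (Set.image2 m U V)
      rw [hdistl u V]
      apply sSup_le
      rintro _ ⟨v, hv, rfl⟩
      exact le_sSup (Set.mem_image2_of_mem hu hv)
  · -- unit
    exact ⟨hUCC e, L1 e⟩
  · -- involution
    intro U _
    exact (hstsup U).symm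
end
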